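/- arXiv:2211.01681 — 4 statements merged into one kernel-verified Lean document; each statement's English description precedes it below -/
import Mathlib

section
/- For a PSD matrix A with 0 ≤ A ≤ 1 (in the Loewner order) and a real number δ, the matrix exponential satisfies exp(δA) ≤ 1 + δ·exp(δ)·A in the Loewner order. -/
open Matrix
open scoped ComplexOrder

private lemma exp_scalar_key (δ x : ℝ) (h0 : 0 ≤ x) (h1 : x ≤ 1) :
    Real.exp (δ * x) ≤ 1 + δ * Real.exp δ * x := by
  have hconv := convexOn_exp.2 (Set.mem_univ (0 : ℝ)) (Set.mem_univ δ)
    (by linarith : (0:ℝ) ≤ 1 - x) h0 (by ring)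
  simp only [smul_eq_mul, mul_zero, zero_add, Real.exp_zero, mul_one] at hconv
  have h2 : Real.exp δ - 1 ≤ δ * Real.exp δ := by
    have h3 := Real.add_one_le_exp (-δ)
    have h4 : (-δ + 1) * Real.exp δ ≤ Real.exp (-δ) * Real.exp δ :=
      mul_le_mul_of_nonneg_right h3 (Real.exp_pos δ).le
    rw [← Real.exp_add, neg_add_cancel, Real.exp_zero] at h4
    nlinarith [Real.exp_pos δ]
  have h5 : x * (Real.exp δ - 1) ≤ x * (δ * Real.exp δ) :=
    mul_le_mul_of_nonneg_left h2 h0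
  rw [mul_comm x δ] at hconv
  nlinarith

/-- Fact: for a PSD matrix `A` with `0 ≤ A ≤ 1` in the Loewner order and a real `δ`,
`exp (δ • A) ≤ 1 + δ • exp δ • A` in the Loewner order. -/
theorem exp_smul_loewner_le {n : Type*} [Fintype n] [DecidableEq n]
    (A : Matrix n n ℂ) (hA : A.PosSemidef) (hA1 : ((1 : Matrix n n ℂ) - A).PosSemidef)
    (δ : ℝ) :
    ((1 : Matrix n n ℂ) + (δ * Real.exp δ) • A - NormedSpace.exp (δ • A)).PosSemidef := by
  classical
  have hH : A.IsHermitian := hA.1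
  set U : Matrix n n ℂ := (hH.eigenvectorUnitary : Matrix n n ℂ) with hUdef
  set lam : n → ℝ := hH.eigenvalues with hlam
  have hUU : U * star U = 1 := mem_unitaryGroup_iff.mp hH.eigenvectorUnitary.2
  have hUU' : star U * U = 1 := mem_unitaryGroup_iff'.mp hH.eigenvectorUnitary.2
  have hUisUnit : IsUnit U := ⟨⟨U, star U, hUU, hUU'⟩, rfl⟩
  have hUinv : U⁻¹ = star U := inv_eq_right_inv hUU
  have hspec : A = U * diagonal (fun i => (lam i : ℂ)) * star U := hH.spectral_theorem
  -- eigenvalue bounds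
  have hev0 : ∀ i, 0 ≤ lam i := fun i => hA.eigenvalues_nonneg i
  have hev1 : ∀ i, lam i ≤ 1 := by
    intro i
    have hd : star U * ((1 : Matrix n n ℂ) - A) * U
        = diagonal (fun i => (1 - lam i : ℂ)) := by
      rw [Matrix.mul_sub, Matrix.sub_mul, Matrix.mul_one, hUU', hspec]
      rw [show star U * (U * diagonal (fun i => (lam i : ℂ)) * star U) * U
          = (star U * U) * diagonal (fun i => (lam i : ℂ)) * (star U * U) by
        simp only [Matrix.mul_assoc]]
      rw [hUU', Matrix.one_mul, Matrix.mul_one]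
      ext j k
      by_cases h : j = k <;> simp [diagonal, h, Matrix.one_apply]
    have hpsd : (diagonal (fun i => (1 - lam i : ℂ))).PosSemidef := by
      rw [← hd, Matrix.star_eq_conjTranspose]
      exact hA1.conjTranspose_mul_mul_same U
    have := posSemidef_diagonal_iff.mp hpsd i
    have h01 : (0:ℝ) ≤ 1 - lam i := by exact_mod_cast this
    linarith
  -- exp computation
  have hsmul : ∀ (c : ℝ), c • A = U * diagonal (fun i => ((c * lam i : ℝ) : ℂ)) * star U := by
    intro c
    rw [hspec]
    have hD : (diagonal fun i => ((c * lam i : ℝ) : ℂ))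
        = c • diagonal fun i => ((lam i : ℝ) : ℂ) := by
      ext i j
      rcases eq_or_ne i j with h | h
      · simp [h, Complex.real_smul]
      · simp [Matrix.diagonal_apply_ne _ h, h]
    rw [hD, Matrix.mul_smul, Matrix.smul_mul]
  have hexp : NormedSpace.exp (δ • A)
      = U * diagonal (fun i => ((Real.exp (δ * lam i) : ℝ) : ℂ)) * star U := by
    rw [hsmul δ, ← hUinv, Matrix.exp_conj U _ hUisUnit, Matrix.exp_diagonal]
    have hE : (NormedSpace.exp fun i => ((δ * lam i : ℝ) : ℂ))
        = fun i => ((Real.exp (δ * lam i) : ℝ) : ℂ) := by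
      funext i
      rw [Pi.coe_exp, ← Complex.exp_eq_exp_ℂ, ← Complex.ofReal_exp]
    rw [hE]
  have hone : (1 : Matrix n n ℂ) = U * diagonal (fun _ => (1 : ℂ)) * star U := by
    rw [diagonal_one, Matrix.mul_one, hUU]
  have hkey : (1 : Matrix n n ℂ) + (δ * Real.exp δ) • A - NormedSpace.exp (δ • A)
      = U * diagonal (fun i =>
          ((1 + δ * Real.exp δ * lam i - Real.exp (δ * lam i) : ℝ) : ℂ)) * star U := by
    rw [hexp, hsmul (δ * Real.exp δ), hone]
    rw [← Matrix.add_mul, ← Matrix.sub_mul, ← Matrix.mul_add, ← Matrix.mul_sub,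
      diagonal_add, diagonal_sub]
    congr 2
    ext i
    push_cast
    ring
  rw [hkey, Matrix.star_eq_conjTranspose U]
  refine PosSemidef.mul_mul_conjTranspose_same ?_ U
  refine posSemidef_diagonal_iff.mpr fun i => ?_
  have : (0:ℝ) ≤ 1 + δ * Real.exp δ * lam i - Real.exp (δ * lam i) := by
    have := exp_scalar_key δ (lam i) (hev0 i) (hev1 i)
    linarith
  exact_mod_cast this
end

section
/- If P(t) is a differentiable matrix-valued function such that P(t) commutes with its derivative dP/dt at every time t, then d/dt exp(P(t)) = (dP/dt)·exp(P(t)) = exp(P(t))·(dP/dt). -/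
open Matrix

attribute [local instance] Matrix.frobeniusNormedAddCommGroup Matrix.frobeniusNormedSpace

attribute [local instance] Matrix.frobeniusNormedRing Matrix.frobeniusNormedAlgebra

/-- If `P t` commutes with its derivative `P' t` for all `t`, then
`d/dt exp (P t) = P' t * exp (P t) = exp (P t) * P' t`. -/
theorem hasDerivAt_matrix_exp_of_commute {n : Type*} [Fintype n] [DecidableEq n]
    (P P' : ℝ → Matrix n n ℂ)
    (hP : ∀ t, HasDerivAt P (P' t) t)
    (hcomm : ∀ t, P t * P' t = P' t * P t) (t : ℝ) :
    HasDerivAt (fun s => NormedSpace.exp (P s)) (P' t * NormedSpace.exp (P t)) t ∧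
      P' t * NormedSpace.exp (P t) = NormedSpace.exp (P t) * P' t := by
  set A := P t with hA
  set B := P' t with hB
  have hAB : Commute A B := hcomm t
  have hexpAB : Commute (NormedSpace.exp A) B := hAB.exp_left
  have hd : HasFDerivAt (NormedSpace.exp) (fderiv ℂ (NormedSpace.exp) A) A := by
    refine ((NormedSpace.analyticAt_exp_of_mem_ball A ?_).differentiableAt).hasFDerivAt
    rw [NormedSpace.expSeries_radius_eq_top]
    exact edist_lt_top _ _
  set L := fderiv ℂ (NormedSpace.exp) A with hL
  have hg : HasDerivAt (fun s : ℝ => A + s • B) B 0 := by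
    have := ((hasDerivAt_id (0 : ℝ)).smul_const B).const_add A
    rw [one_smul] at this
    exact this
  have hd0 : HasFDerivAt (NormedSpace.exp) (L.restrictScalars ℝ)
      (A + (0 : ℝ) • B) := by rw [zero_smul, add_zero]; exact hd.restrictScalars ℝ
  have h1 : HasDerivAt (fun s : ℝ => NormedSpace.exp (A + s • B)) (L B) 0 :=
    by have := hd0.comp_hasDerivAt 0 hg; exact this
  have h2 : HasDerivAt (fun s : ℝ => NormedSpace.exp A * NormedSpace.exp (s • B))
      (NormedSpace.exp A * B) 0 := by
    have := (hasDerivAt_exp_smul_const (𝕂 := ℝ) B 0).const_mul (NormedSpace.exp A)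
    rw [zero_smul, NormedSpace.exp_zero, one_mul] at this
    exact this
  have hfun : (fun s : ℝ => NormedSpace.exp (A + s • B)) =
      fun s : ℝ => NormedSpace.exp A * NormedSpace.exp (s • B) := by
    funext s
    exact NormedSpace.exp_add_of_commute (hAB.smul_right s)
  have hLB : L B = NormedSpace.exp A * B := by
    have h1' : HasDerivAt (fun s : ℝ => NormedSpace.exp A * NormedSpace.exp (s • B))
        (L B) 0 := hfun ▸ h1
    exact h1'.unique h2
  have hmain : HasDerivAt (fun s => NormedSpace.exp (P s)) (L B) t :=
    (hd.restrictScalars ℝ).comp_hasDerivAt t (hP t)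
  have hcomm' : NormedSpace.exp A * B = B * NormedSpace.exp A := hexpAB
  refine ⟨?_, hcomm'.symm⟩
  rw [← hcomm', ← hLB]
  exact hmain
end

section
/- Let A_{j-1} be positive definite Hermitian, C Hermitian with 0 ⪯ C ⪯ I, μ > 0, A_j = exp(log A_{j-1} + μC), and ρ_{j-1} = A_{j-1}/Tr(A_{j-1}). Then log(Tr A_j / Tr A_{j-1}) ≤ μ·exp(μ)·Tr(ρ_{j-1} C). -/
open Matrix
open scoped ComplexOrder

/-- The principal logarithm of a Hermitian matrix (junk value `0` otherwise). -/
noncomputable def mlog {n : Type*} [Fintype n] [DecidableEq n] (A : Matrix n n ℂ) :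
    Matrix n n ℂ :=
  if hA : A.IsHermitian then hA.cfc Real.log else 0

section MMWUAux

open NormedSpace

lemma aux_g_nonneg {t : ℝ} (ht : 0 ≤ t) : 0 ≤ t * Real.exp t - Real.exp t + 1 := by
  have h1 : MonotoneOn (fun t : ℝ => t * Real.exp t - Real.exp t + 1) (Set.Ici 0) := by
    apply monotoneOn_of_deriv_nonneg (convex_Ici 0)
    · fun_prop
    · intro x hx
      apply DifferentiableAt.differentiableWithinAt
      fun_prop
    · intro x hx
      have h : HasDerivAt (fun t : ℝ => t * Real.exp t - Real.exp t + 1) (x * Real.exp x) x := by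
        have h := (((hasDerivAt_id x).mul (Real.hasDerivAt_exp x)).sub
          (Real.hasDerivAt_exp x)).add_const 1
        refine h.congr_deriv ?_
        simp only [id_eq]
        ring
      rw [h.deriv]
      rw [interior_Ici] at hx
      exact mul_nonneg (le_of_lt hx) (Real.exp_pos x).le
  have h2 := h1 (Set.self_mem_Ici) (Set.mem_Ici.mpr ht) ht
  simpa using h2

lemma two_mul_exp_sub_one_le {t : ℝ} (ht : 0 ≤ t) :
    2 * (Real.exp t - 1) ≤ t * (Real.exp t + 1) := by
  have h1 : MonotoneOn (fun t : ℝ => t * (Real.exp t + 1) - 2 * (Real.exp t - 1)) (Set.Ici 0) := by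
    apply monotoneOn_of_deriv_nonneg (convex_Ici 0)
    · fun_prop
    · intro x hx
      apply DifferentiableAt.differentiableWithinAt
      fun_prop
    · intro x hx
      rw [interior_Ici] at hx
      have h : HasDerivAt (fun t : ℝ => t * (Real.exp t + 1) - 2 * (Real.exp t - 1))
          (x * Real.exp x - Real.exp x + 1) x := by
        have h := (((hasDerivAt_id x).mul ((Real.hasDerivAt_exp x).add_const 1)).sub
          (((Real.hasDerivAt_exp x).sub_const 1).const_mul 2))
        refine h.congr_deriv ?_
        simp only [id_eq]
        ring
      rw [h.deriv]
      exact aux_g_nonneg hx.le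
  have h2 := h1 (Set.self_mem_Ici) (Set.mem_Ici.mpr ht) ht
  simp only [Real.exp_zero] at h2
  linarith

lemma exp_div_diff_le {a b : ℝ} (hab : b < a) :
    (Real.exp a - Real.exp b) / (a - b) ≤ (Real.exp a + Real.exp b) / 2 := by
  rw [div_le_div_iff₀ (by linarith) two_pos]
  have h := two_mul_exp_sub_one_le (t := a - b) (by linarith)
  have hb := Real.exp_pos b
  have hmul : Real.exp (a - b) * Real.exp b = Real.exp a := by
    rw [← Real.exp_add]; ring_nf
  nlinarith [mul_le_mul_of_nonneg_right h hb.le]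

lemma real_exp_tsum (a : ℝ) : Real.exp a = ∑' k : ℕ, a ^ k / (k.factorial : ℝ) := by
  rw [Real.exp_eq_exp_ℝ, NormedSpace.exp_eq_tsum_div]

lemma abs_geom₂_le {a b M : ℝ} (hM : |a| ≤ M) (hM' : |b| ≤ M) (k : ℕ) :
    |∑ j ∈ Finset.range k, a ^ j * b ^ (k - 1 - j)| ≤ k * M ^ (k - 1) := by
  have hM0 : 0 ≤ M := le_trans (abs_nonneg a) hM
  calc |∑ j ∈ Finset.range k, a ^ j * b ^ (k - 1 - j)|
      ≤ ∑ j ∈ Finset.range k, |a ^ j * b ^ (k - 1 - j)| := Finset.abs_sum_le_sum_abs _ _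
    _ ≤ ∑ j ∈ Finset.range k, M ^ (k - 1) := by
        apply Finset.sum_le_sum
        intro j hj
        rw [Finset.mem_range] at hj
        have : |a ^ j * b ^ (k - 1 - j)| = |a| ^ j * |b| ^ (k - 1 - j) := by
          rw [abs_mul, abs_pow, abs_pow]
        rw [this]
        have h1 : |a| ^ j * |b| ^ (k - 1 - j) ≤ M ^ j * M ^ (k - 1 - j) :=
          mul_le_mul (pow_le_pow_left₀ (abs_nonneg a) hM j)
            (pow_le_pow_left₀ (abs_nonneg b) hM' _) (by positivity) (by positivity)
        have h2 : M ^ j * M ^ (k - 1 - j) = M ^ (k - 1) := by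
          rw [← pow_add]
          congr 1
          omega
        linarith
    _ = k * M ^ (k - 1) := by rw [Finset.sum_const, Finset.card_range, nsmul_eq_mul]

lemma summable_kfac (M : ℝ) :
    Summable (fun k : ℕ => (k.factorial : ℝ)⁻¹ * (k * M ^ (k - 1))) := by
  apply (summable_nat_add_iff 1).mp
  have : (fun k : ℕ => ((k + 1).factorial : ℝ)⁻¹ * ((k + 1 : ℕ) * M ^ (k + 1 - 1)))
      = fun k : ℕ => M ^ k / (k.factorial : ℝ) := by
    funext k
    have hk : ((k + 1).factorial : ℝ) = (k + 1) * (k.factorial : ℝ) := by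
      rw [Nat.factorial_succ]; push_cast; ring
    rw [hk]
    have h1 : ((k : ℝ) + 1) ≠ 0 := by positivity
    have h2 : (k.factorial : ℝ) ≠ 0 := Nat.cast_ne_zero.mpr k.factorial_ne_zero
    simp only [Nat.add_sub_cancel, Nat.cast_add, Nat.cast_one]
    field_simp
  rw [this]
  exact Real.summable_pow_div_factorial M

noncomputable def g2ser (a b : ℝ) (k : ℕ) : ℝ :=
  (k.factorial : ℝ)⁻¹ * ∑ j ∈ Finset.range k, a ^ j * b ^ (k - 1 - j)

lemma g2ser_bound {a b M : ℝ} (hM : |a| ≤ M) (hM' : |b| ≤ M) (k : ℕ) :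
    ‖g2ser a b k‖ ≤ (k.factorial : ℝ)⁻¹ * (k * M ^ (k - 1)) := by
  rw [Real.norm_eq_abs, g2ser, abs_mul, abs_inv, Nat.abs_cast]
  exact mul_le_mul_of_nonneg_left (abs_geom₂_le hM hM' k) (by positivity)

lemma g2_summable (a b : ℝ) : Summable (g2ser a b) := by
  apply Summable.of_norm_bounded (summable_kfac (max |a| |b|))
  intro k
  exact g2ser_bound (le_max_left _ _) (le_max_right _ _) k

lemma summable_exp_ser (a : ℝ) : Summable (fun k : ℕ => a ^ k / (k.factorial : ℝ)) :=
  Real.summable_pow_div_factorial a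

lemma g2_eq_of_ne {a b : ℝ} (hab : a ≠ b) :
    ∑' k, g2ser a b k = (Real.exp a - Real.exp b) / (a - b) := by
  have hab' : a - b ≠ 0 := sub_ne_zero.mpr hab
  have hser : ∀ k, g2ser a b k = (a ^ k / (k.factorial : ℝ) - b ^ k / (k.factorial : ℝ)) / (a - b) := by
    intro k
    have h := geom_sum₂_mul a b k
    have h2 : (∑ j ∈ Finset.range k, a ^ j * b ^ (k - 1 - j)) = (a ^ k - b ^ k) / (a - b) := by
      rw [eq_div_iff hab']; exact h
    rw [g2ser, h2]
    field_simp
  simp_rw [hser]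
  rw [tsum_div_const, Summable.tsum_sub (summable_exp_ser a) (summable_exp_ser b),
    ← real_exp_tsum, ← real_exp_tsum]

lemma g2_le (a b : ℝ) : ∑' k, g2ser a b k ≤ (Real.exp a + Real.exp b) / 2 := by
  by_cases hab : a = b
  · subst hab
    have hser : ∀ k, g2ser a a k = (k.factorial : ℝ)⁻¹ * (k * a ^ (k - 1)) := by
      intro k
      rw [g2ser]
      congr 1
      calc (∑ j ∈ Finset.range k, a ^ j * a ^ (k - 1 - j))
          = ∑ j ∈ Finset.range k, a ^ (k - 1) := by
            apply Finset.sum_congr rfl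
            intro j hj
            rw [Finset.mem_range] at hj
            rw [← pow_add]
            congr 1
            omega
        _ = k * a ^ (k - 1) := by rw [Finset.sum_const, Finset.card_range, nsmul_eq_mul]
    have hsum : Summable (g2ser a a) := g2_summable a a
    have h0 : ∑' k, g2ser a a k = Real.exp a := by
      rw [Summable.tsum_eq_zero_add hsum]
      have h00 : g2ser a a 0 = 0 := by simp [g2ser]
      have h1 : ∀ k : ℕ, g2ser a a (k + 1) = a ^ k / (k.factorial : ℝ) := by
        intro k
        rw [hser]
        have hk : ((k + 1).factorial : ℝ) = (k + 1) * (k.factorial : ℝ) := by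
          rw [Nat.factorial_succ]; push_cast; ring
        rw [hk]
        have h1 : ((k : ℝ) + 1) ≠ 0 := by positivity
        have h2 : (k.factorial : ℝ) ≠ 0 := Nat.cast_ne_zero.mpr k.factorial_ne_zero
        push_cast
        field_simp
      simp_rw [h00, h1, zero_add]
      exact (real_exp_tsum a).symm
    rw [h0]
    linarith [Real.exp_pos a]
  · rw [g2_eq_of_ne hab]
    rcases lt_or_gt_of_ne hab with h | h
    · have := exp_div_diff_le h
      have heq : (Real.exp a - Real.exp b) / (a - b) = (Real.exp b - Real.exp a) / (b - a) := by
        rw [div_eq_div_iff (by linarith) (by linarith)]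
        ring
      rw [heq]
      linarith [exp_div_diff_le h]
    · have := exp_div_diff_le h
      linarith [exp_div_diff_le h]


attribute [local instance] Matrix.linftyOpNormedAddCommGroup Matrix.linftyOpNormedRing
  Matrix.linftyOpNormedAlgebra Matrix.linftyOpNormedSpace

variable {n : Type*} [Fintype n] [DecidableEq n]

@[reducible] noncomputable def clmOpNorm : Norm (Matrix n n ℂ →L[ℝ] ℝ) :=
  ContinuousLinearMap.hasOpNorm

attribute [local instance] clmOpNorm

/-- `M ↦ Re (Tr (M * E))` as a continuous linear map. -/
noncomputable def trE (E : Matrix n n ℂ) : Matrix n n ℂ →L[ℝ] ℝ :=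
  LinearMap.toContinuousLinearMap
    { toFun := fun M => ((M * E).trace).re
      map_add' := by intros; simp [add_mul]
      map_smul' := by
        intro r M
        simp [Matrix.smul_mul, Matrix.trace_smul, Complex.smul_re] }

lemma trE_apply (E M : Matrix n n ℂ) : trE E M = ((M * E).trace).re := rfl

noncomputable def Xl (H C : Matrix n n ℂ) (s : ℝ) : Matrix n n ℂ := H + s • C

noncomputable def Dpow (H C : Matrix n n ℂ) (s : ℝ) (k : ℕ) : Matrix n n ℂ :=
  ∑ j ∈ Finset.range k, Xl H C s ^ j * C * Xl H C s ^ (k - 1 - j)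

lemma hasDerivAt_Xl (H C : Matrix n n ℂ) (s : ℝ) : HasDerivAt (Xl H C) C s := by
  have h : HasDerivAt (fun s : ℝ => s • C) ((1 : ℝ) • C) s := (hasDerivAt_id s).smul_const C
  have h2 := h.const_add H
  rw [one_smul] at h2
  exact h2

lemma hasDerivAt_pow_Xl (H C : Matrix n n ℂ) (s : ℝ) (k : ℕ) :
    HasDerivAt (fun s => Xl H C s ^ k) (Dpow H C s k) s := by
  induction k with
  | zero =>
    simp only [Dpow, pow_zero, Finset.range_zero, Finset.sum_empty]
    exact hasDerivAt_const s (1 : Matrix n n ℂ)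
  | succ k ih =>
    have h := ih.mul (hasDerivAt_Xl H C s)
    have he : Dpow H C s k * Xl H C s + Xl H C s ^ k * C = Dpow H C s (k + 1) := by
      rw [Dpow, Dpow, Finset.sum_range_succ, Finset.sum_mul]
      congr 1
      · apply Finset.sum_congr rfl
        intro j hj
        rw [Finset.mem_range] at hj
        rw [mul_assoc, ← pow_succ]
        congr 2
        omega
      · simp
    have hfun : (fun s => Xl H C s ^ (k + 1)) = fun s => Xl H C s ^ k * Xl H C s := by
      funext t; rw [pow_succ]
    rw [hfun, ← he]
    exact h

lemma norm_Xl_le {H C : Matrix n n ℂ} {R s : ℝ} (hs : |s| ≤ R) :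
    ‖Xl H C s‖ ≤ ‖H‖ + R * ‖C‖ := by
  calc ‖H + s • C‖ ≤ ‖H‖ + ‖s • C‖ := norm_add_le _ _
    _ ≤ ‖H‖ + R * ‖C‖ := by
        rw [norm_smul, Real.norm_eq_abs]
        exact add_le_add_right (mul_le_mul_of_nonneg_right hs (norm_nonneg C)) _

lemma norm_Dpow_le [Nonempty n] {H C : Matrix n n ℂ} {R s : ℝ} (hs : |s| ≤ R) (hR : 0 ≤ R)
    (k : ℕ) : ‖Dpow H C s k‖ ≤ k * (‖H‖ + R * ‖C‖) ^ (k - 1) * ‖C‖ := by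
  set K := ‖H‖ + R * ‖C‖ with hK
  have hK0 : 0 ≤ K := by positivity
  have hXK : ‖Xl H C s‖ ≤ K := norm_Xl_le hs
  calc ‖Dpow H C s k‖ ≤ ∑ j ∈ Finset.range k, ‖Xl H C s ^ j * C * Xl H C s ^ (k - 1 - j)‖ :=
        norm_sum_le _ _
    _ ≤ ∑ j ∈ Finset.range k, K ^ (k - 1) * ‖C‖ := by
        apply Finset.sum_le_sum
        intro j hj
        rw [Finset.mem_range] at hj
        have h1 : ‖Xl H C s ^ j * C * Xl H C s ^ (k - 1 - j)‖
            ≤ ‖Xl H C s ^ j‖ * ‖C‖ * ‖Xl H C s ^ (k - 1 - j)‖ :=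
          le_trans (norm_mul_le _ _) (mul_le_mul_of_nonneg_right (norm_mul_le _ _) (norm_nonneg _))
        have h2 : ‖Xl H C s ^ j‖ ≤ K ^ j :=
          le_trans (norm_pow_le _ _) (pow_le_pow_left₀ (norm_nonneg _) hXK j)
        have h3 : ‖Xl H C s ^ (k - 1 - j)‖ ≤ K ^ (k - 1 - j) :=
          le_trans (norm_pow_le _ _) (pow_le_pow_left₀ (norm_nonneg _) hXK _)
        calc ‖Xl H C s ^ j * C * Xl H C s ^ (k - 1 - j)‖
            ≤ K ^ j * ‖C‖ * K ^ (k - 1 - j) := by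
              refine le_trans h1 ?_
              gcongr
            _ = K ^ (k - 1) * ‖C‖ := by
              rw [mul_comm (K ^ j) ‖C‖, mul_assoc, ← pow_add]
              rw [mul_comm ‖C‖ _]
              congr 2
              omega
    _ = k * K ^ (k - 1) * ‖C‖ := by
        rw [Finset.sum_const, Finset.card_range, nsmul_eq_mul]; ring

lemma summable_trE_pow (E M : Matrix n n ℂ) :
    Summable (fun k : ℕ => (k.factorial : ℝ)⁻¹ * trE E (M ^ k)) := by
  have h1 : Summable (fun k : ℕ => ((k.factorial : ℂ))⁻¹ • M ^ k) :=
    NormedSpace.expSeries_summable' M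
  have h2 := h1.map (trE E).toLinearMap.toAddMonoidHom (trE E).continuous
  have h4 : (fun k : ℕ => (k.factorial : ℝ)⁻¹ * trE E (M ^ k))
      = fun k : ℕ => trE E (((k.factorial : ℂ))⁻¹ • M ^ k) := by
    funext k
    have h3 : ((k.factorial : ℂ))⁻¹ • M ^ k = ((k.factorial : ℝ))⁻¹ • M ^ k := by
      rw [RCLike.real_smul_eq_coe_smul (K := ℂ)]
      norm_num
    rw [h3, (trE E).map_smul, smul_eq_mul]
  rw [h4]
  exact h2

lemma trE_exp (E M : Matrix n n ℂ) :
    trE E (NormedSpace.exp M) = ∑' k : ℕ, (k.factorial : ℝ)⁻¹ * trE E (M ^ k) := by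
  rw [exp_eq_tsum ℂ, (trE E).map_tsum (NormedSpace.expSeries_summable' (𝕂 := ℂ) M)]
  congr 1
  funext k
  have h3 : ((k.factorial : ℂ))⁻¹ • M ^ k = ((k.factorial : ℝ))⁻¹ • M ^ k := by
    rw [RCLike.real_smul_eq_coe_smul (K := ℂ)]
    norm_num
  rw [h3, (trE E).map_smul, smul_eq_mul]

lemma hasDerivAt_trE_exp [Nonempty n] (H C E : Matrix n n ℂ) (s : ℝ) :
    HasDerivAt (fun s => trE E (NormedSpace.exp (Xl H C s)))
      (∑' k : ℕ, (k.factorial : ℝ)⁻¹ * trE E (Dpow H C s k)) s := by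
  set R := |s| + 1 with hR
  set K := ‖H‖ + R * ‖C‖ with hK
  have hR0 : (0 : ℝ) ≤ R := by positivity
  set u : ℕ → ℝ := fun k => ‖trE E‖ * ‖C‖ * ((k.factorial : ℝ)⁻¹ * (k * K ^ (k - 1))) with hu_def
  have hu : Summable u := (summable_kfac K).mul_left _
  have hmem : s ∈ Metric.ball (0 : ℝ) R := by
    simp [Real.dist_eq, hR]
  have key := hasDerivAt_tsum_of_isPreconnected hu Metric.isOpen_ball
    (convex_ball (0:ℝ) R).isPreconnected
    (g := fun k y => (k.factorial : ℝ)⁻¹ * trE E (Xl H C y ^ k))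
    (g' := fun k y => (k.factorial : ℝ)⁻¹ * trE E (Dpow H C y k))
    (fun k y _ => by
      have h := ((trE E).hasFDerivAt.comp_hasDerivAt y (hasDerivAt_pow_Xl H C y k)).const_mul
        ((k.factorial : ℝ)⁻¹)
      exact h)
    (fun k y hy => by
      have hyR : |y| ≤ R := by
        rw [Metric.mem_ball, Real.dist_eq, sub_zero] at hy
        exact hy.le
      have hb := (trE E).le_opNorm (Dpow H C y k)
      have hD := norm_Dpow_le (H := H) (C := C) hyR hR0 k
      have hfac : (0:ℝ) ≤ (k.factorial : ℝ)⁻¹ := by positivity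
      calc ‖(k.factorial : ℝ)⁻¹ * trE E (Dpow H C y k)‖
          = (k.factorial : ℝ)⁻¹ * ‖trE E (Dpow H C y k)‖ := by
            rw [norm_mul, Real.norm_eq_abs, abs_inv, Nat.abs_cast, Real.norm_eq_abs]
        _ ≤ (k.factorial : ℝ)⁻¹ * (‖trE E‖ * (k * K ^ (k - 1) * ‖C‖)) := by
            apply mul_le_mul_of_nonneg_left _ hfac
            exact le_trans hb (mul_le_mul_of_nonneg_left hD (norm_nonneg _))
        _ = u k := by rw [hu_def]; ring)
    hmem (by
      have := summable_trE_pow E (Xl H C s)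
      exact this) hmem
  have hfun : (fun z => ∑' k : ℕ, (k.factorial : ℝ)⁻¹ * trE E (Xl H C z ^ k))
      = fun z => trE E (NormedSpace.exp (Xl H C z)) := by
    funext z
    exact (trE_exp E (Xl H C z)).symm
  rw [hfun] at key
  exact key

lemma Xl_isHermitian {H C : Matrix n n ℂ} (hH : H.IsHermitian) (hC : C.IsHermitian) (s : ℝ) :
    (Xl H C s).IsHermitian := by
  rw [Xl]
  apply hH.add
  have hs : (s • C)ᴴ = s • Cᴴ := by
    ext i j
    simp [Matrix.conjTranspose_apply, Matrix.smul_apply, star_smul]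
  rw [Matrix.IsHermitian, hs, hC.eq]

lemma psd_diag_re_nonneg {M : Matrix n n ℂ} (hM : M.PosSemidef) (i : n) : 0 ≤ (M i i).re := by
  have h := hM.re_dotProduct_nonneg (Pi.single i 1)
  simpa [dotProduct, mulVec, Pi.single_apply] using h

lemma trace_diag_mul_mul (d e : n → ℂ) (B : Matrix n n ℂ) :
    (diagonal d * B * diagonal e * B).trace = ∑ i, ∑ j, d i * e j * (B i j * B j i) := by
  rw [Matrix.trace]
  apply Finset.sum_congr rfl
  intro i _
  rw [Matrix.diag_apply, Matrix.mul_apply]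
  apply Finset.sum_congr rfl
  intro j _
  rw [Matrix.mul_diagonal, Matrix.diagonal_mul]
  ring

/-- The key spectral bounds: nonnegativity of `Tr(e^X C)` and the Duhamel-type estimate. -/
lemma spectral_bounds {H C : Matrix n n ℂ} (hH : H.IsHermitian) (hC : C.IsHermitian)
    (hC0 : C.PosSemidef) (hC1 : ((1 : Matrix n n ℂ) - C).PosSemidef) (s : ℝ) :
    0 ≤ trE C (NormedSpace.exp (Xl H C s)) ∧
      ∑' k, (k.factorial : ℝ)⁻¹ * trE C (Dpow H C s k) ≤ trE C (NormedSpace.exp (Xl H C s)) := by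
  have hXh : (Xl H C s).IsHermitian := Xl_isHermitian hH hC s
  set X := Xl H C s with hX
  set V : Matrix n n ℂ := (Matrix.IsHermitian.eigenvectorUnitary hXh : Matrix n n ℂ) with hVdef
  have hV1 : star V * V = 1 := (Matrix.mem_unitaryGroup_iff').mp
    (Matrix.IsHermitian.eigenvectorUnitary hXh).2
  have hV2 : V * star V = 1 := (Matrix.mem_unitaryGroup_iff).mp
    (Matrix.IsHermitian.eigenvectorUnitary hXh).2
  set lam : n → ℝ := hXh.eigenvalues with hlam
  set Λ : Matrix n n ℂ := diagonal (fun i => (lam i : ℂ)) with hLam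
  have hspec : X = V * Λ * star V := by
    have h := hXh.spectral_theorem
    rw [Unitary.conjStarAlgAut_apply] at h
    exact h
  set B : Matrix n n ℂ := star V * C * V with hBdef
  have hB : B.IsHermitian := by
    rw [Matrix.IsHermitian, hBdef, Matrix.conjTranspose_mul, Matrix.conjTranspose_mul,
      Matrix.star_eq_conjTranspose, Matrix.conjTranspose_conjTranspose, hC.eq, Matrix.mul_assoc]
  have hBpsd : B.PosSemidef := by
    have h := hC0.conjTranspose_mul_mul_same (B := V)
    rwa [← Matrix.star_eq_conjTranspose] at h
  have hBBpsd : (B - B * B).PosSemidef := by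
    have hBB : B * B = star V * (C * C) * V := by
      rw [hBdef]
      calc star V * C * V * (star V * C * V) = star V * C * (V * star V) * (C * V) := by
            simp only [Matrix.mul_assoc]
        _ = star V * (C * C) * V := by rw [hV2]; simp only [Matrix.mul_one, Matrix.mul_assoc]
    have hsub : B - B * B = star V * (C - C * C) * V := by
      rw [hBB, hBdef, Matrix.mul_sub, Matrix.sub_mul]
    have hCC : (C - C * C).PosSemidef := by
      have hsum := (hC0.conjTranspose_mul_mul_same (1 - C)).add (hC1.conjTranspose_mul_mul_same C)
      have hE : (1 - C)ᴴ * C * (1 - C) + Cᴴ * (1 - C) * C = C - C * C := by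
        rw [Matrix.conjTranspose_sub, Matrix.conjTranspose_one, hC.eq]
        noncomm_ring
      rwa [hE] at hsum
    rw [hsub]
    have h5 := hCC.conjTranspose_mul_mul_same (B := V)
    rwa [← Matrix.star_eq_conjTranspose] at h5
  -- powers of X
  have hpow : ∀ a : ℕ, X ^ a = V * Λ ^ a * star V := by
    intro a
    induction a with
    | zero => rw [pow_zero, pow_zero, Matrix.mul_one, hV2]
    | succ a ih =>
      rw [pow_succ, ih, hspec]
      have h6 : V * Λ ^ a * star V * (V * Λ * star V) = V * Λ ^ a * (star V * V) * (Λ * star V) := by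
        simp only [Matrix.mul_assoc]
      rw [h6, hV1, Matrix.mul_one, pow_succ]
      simp only [Matrix.mul_assoc]
  -- trace of conjugated matrix
  have htrconj : ∀ M : Matrix n n ℂ, (V * M * star V).trace = M.trace := by
    intro M
    rw [Matrix.trace_mul_cycle, hV1, Matrix.one_mul]
  -- symmetry and positivity facts about B
  have hBapp : ∀ i j, B j i = (starRingEnd ℂ) (B i j) := by
    intro i j
    have h := congrFun (congrFun hB.eq j) i
    rw [Matrix.conjTranspose_apply] at h
    rw [← h]
    simp [Complex.star_def]
  have hmulconj : ∀ i j, B i j * B j i = (Complex.normSq (B i j) : ℂ) := by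
    intro i j
    rw [hBapp i j, Complex.mul_conj]
  -- the main trace identity
  have htrace : ∀ a b : ℕ, (X ^ a * C * X ^ b * C).trace
      = ∑ i, ∑ j, ((lam i ^ a * lam j ^ b * Complex.normSq (B i j) : ℝ) : ℂ) := by
    intro a b
    have hconj : V * (Λ ^ a * B * Λ ^ b * B) * star V = X ^ a * C * X ^ b * C := by
      rw [hpow a, hpow b, hBdef]
      have hgoal : V * (Λ ^ a * (star V * C * V) * Λ ^ b * (star V * C * V)) * star V
          = V * Λ ^ a * star V * C * (V * Λ ^ b * star V) * C * (V * star V) := by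
        simp only [Matrix.mul_assoc]
      rw [hgoal, hV2, Matrix.mul_one]
    rw [← hconj, htrconj]
    have hdiagpow : ∀ c : ℕ, Λ ^ c = diagonal (fun i => (lam i : ℂ) ^ c) := by
      intro c
      rw [hLam, Matrix.diagonal_pow]
      rfl
    rw [hdiagpow a, hdiagpow b, trace_diag_mul_mul]
    apply Finset.sum_congr rfl
    intro i _
    apply Finset.sum_congr rfl
    intro j _
    rw [hmulconj i j]
    push_cast
    ring
  -- identity for exp X
  have hexpX : NormedSpace.exp X = V * diagonal (fun i => (Real.exp (lam i) : ℂ)) * star V := by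
    have hU : IsUnit V := ⟨⟨V, star V, hV2, hV1⟩, rfl⟩
    have hinv : V⁻¹ = star V := Matrix.inv_eq_right_inv hV2
    have hd : (NormedSpace.exp fun i => ((lam i : ℝ) : ℂ)) = fun i => ((Real.exp (lam i) : ℝ) : ℂ) := by
      rw [Pi.exp_def]
      funext i
      rw [← Complex.exp_eq_exp_ℂ, Complex.ofReal_exp]
    rw [hspec, ← hinv, Matrix.exp_conj V Λ hU, hLam, Matrix.exp_diagonal, hd]
  have htrexp : ∀ E : Matrix n n ℂ, (NormedSpace.exp X * E).trace
      = ∑ i, (Real.exp (lam i) : ℂ) * (star V * E * V) i i := by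
    intro E
    rw [hexpX]
    have h7 : V * diagonal (fun i => (Real.exp (lam i) : ℂ)) * star V * E
        = V * (diagonal (fun i => (Real.exp (lam i) : ℂ)) * (star V * E * V)) * star V := by
      have : V * (diagonal (fun i => (Real.exp (lam i) : ℂ)) * (star V * E * V)) * star V
          = V * diagonal (fun i => (Real.exp (lam i) : ℂ)) * star V * E * (V * star V) := by
        simp only [Matrix.mul_assoc]
      rw [this, hV2, Matrix.mul_one]
    rw [h7, htrconj, Matrix.trace]
    apply Finset.sum_congr rfl
    intro i _
    rw [Matrix.diag_apply, Matrix.diagonal_mul]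
  -- h s as a real sum
  have hhs : trE C (NormedSpace.exp X) = ∑ i, Real.exp (lam i) * (B i i).re := by
    rw [trE_apply, htrexp C, Complex.re_sum]
    apply Finset.sum_congr rfl
    intro i _
    rw [← hBdef, Complex.mul_re, Complex.ofReal_re, Complex.ofReal_im]
    ring
  constructor
  · rw [hhs]
    apply Finset.sum_nonneg
    intro i _
    exact mul_nonneg (Real.exp_pos _).le (psd_diag_re_nonneg hBpsd i)
  · rw [hhs]
    have hsymm : ∀ i j, Complex.normSq (B j i) = Complex.normSq (B i j) := by
      intro i j
      rw [hBapp i j, Complex.normSq_conj]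
    have hterm : ∀ k : ℕ, (k.factorial : ℝ)⁻¹ * trE C (Dpow H C s k)
        = ∑ p : n × n, Complex.normSq (B p.1 p.2) * g2ser (lam p.1) (lam p.2) k := by
      intro k
      have h8 : ∀ j : ℕ, ((X ^ j * C * X ^ (k - 1 - j)) * C).trace.re
          = ∑ p : n × n, Complex.normSq (B p.1 p.2) * (lam p.1 ^ j * lam p.2 ^ (k - 1 - j)) := by
        intro j
        rw [htrace j (k - 1 - j), Complex.re_sum, Fintype.sum_prod_type]
        apply Finset.sum_congr rfl
        intro i _
        rw [Complex.re_sum]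
        apply Finset.sum_congr rfl
        intro i' _
        rw [Complex.ofReal_re]
        ring
      have h9 : trE C (Dpow H C s k)
          = ∑ j ∈ Finset.range k, ((X ^ j * C * X ^ (k - 1 - j)) * C).trace.re := by
        rw [trE_apply, Dpow, Finset.sum_mul, Matrix.trace_sum, Complex.re_sum]
      rw [h9, Finset.sum_congr rfl fun j _ => h8 j, Finset.sum_comm, Finset.mul_sum]
      apply Finset.sum_congr rfl
      intro p _
      rw [g2ser, Finset.mul_sum, Finset.mul_sum, Finset.mul_sum]
      apply Finset.sum_congr rfl
      intro j _
      ring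
    have hD2eq : ∑' k, (k.factorial : ℝ)⁻¹ * trE C (Dpow H C s k)
        = ∑ p : n × n, Complex.normSq (B p.1 p.2) * ∑' k, g2ser (lam p.1) (lam p.2) k := by
      rw [tsum_congr hterm, Summable.tsum_finsetSum (fun p _ => ((g2_summable _ _).mul_left _))]
      apply Finset.sum_congr rfl
      intro p _
      rw [tsum_mul_left]
    rw [hD2eq]
    calc ∑ p : n × n, Complex.normSq (B p.1 p.2) * ∑' k, g2ser (lam p.1) (lam p.2) k
        ≤ ∑ p : n × n, Complex.normSq (B p.1 p.2)
            * ((Real.exp (lam p.1) + Real.exp (lam p.2)) / 2) :=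
          Finset.sum_le_sum fun p _ =>
            mul_le_mul_of_nonneg_left (g2_le _ _) (Complex.normSq_nonneg _)
      _ = ∑ i, Real.exp (lam i) * ∑ j, Complex.normSq (B i j) := by
          rw [Fintype.sum_prod_type]
          have hhalf : ∀ i : n, ∑ j, Complex.normSq (B i j)
              * ((Real.exp (lam i) + Real.exp (lam j)) / 2)
              = (∑ j, Complex.normSq (B i j) * Real.exp (lam i)) / 2
                + (∑ j, Complex.normSq (B i j) * Real.exp (lam j)) / 2 := by
            intro i
            rw [Finset.sum_div, Finset.sum_div, ← Finset.sum_add_distrib]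
            apply Finset.sum_congr rfl
            intro j _
            ring
          rw [Finset.sum_congr rfl fun i _ => hhalf i, Finset.sum_add_distrib,
            ← Finset.sum_div, ← Finset.sum_div]
          have hswap : ∑ i, ∑ j, Complex.normSq (B i j) * Real.exp (lam j)
              = ∑ i, ∑ j, Complex.normSq (B i j) * Real.exp (lam i) := by
            rw [Finset.sum_comm]
            apply Finset.sum_congr rfl
            intro i _
            apply Finset.sum_congr rfl
            intro j _
            rw [hsymm i j]
          rw [hswap]
          have hfin : ∀ i : n, ∑ j, Complex.normSq (B i j) * Real.exp (lam i)
              = Real.exp (lam i) * ∑ j, Complex.normSq (B i j) := by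
            intro i
            rw [Finset.mul_sum]
            apply Finset.sum_congr rfl
            intro j _
            ring
          rw [Finset.sum_congr rfl fun i _ => hfin i]
          ring
      _ = ∑ i, Real.exp (lam i) * ((B * B) i i).re := by
          apply Finset.sum_congr rfl
          intro i _
          congr 1
          rw [Matrix.mul_apply, Complex.re_sum]
          apply Finset.sum_congr rfl
          intro j _
          rw [hmulconj i j, Complex.ofReal_re]
      _ ≤ ∑ i, Real.exp (lam i) * (B i i).re := by
          apply Finset.sum_le_sum
          intro i _
          apply mul_le_mul_of_nonneg_left _ (Real.exp_pos _).le
          have h10 := psd_diag_re_nonneg hBBpsd i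
          rw [Matrix.sub_apply, Complex.sub_re] at h10
          linarith

-- summability of the derivative series
lemma summable_trE_Dpow [Nonempty n] (E H C : Matrix n n ℂ) (s : ℝ) :
    Summable (fun k : ℕ => (k.factorial : ℝ)⁻¹ * trE E (Dpow H C s k)) := by
  set K := ‖H‖ + |s| * ‖C‖ with hK
  apply Summable.of_norm_bounded ((summable_kfac K).mul_left (‖trE E‖ * ‖C‖))
  intro k
  have hb := (trE E).le_opNorm (Dpow H C s k)
  have hD := norm_Dpow_le (H := H) (C := C) (le_refl |s|) (abs_nonneg s) k
  have hfac : (0:ℝ) ≤ (k.factorial : ℝ)⁻¹ := by positivity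
  calc ‖(k.factorial : ℝ)⁻¹ * trE E (Dpow H C s k)‖
      = (k.factorial : ℝ)⁻¹ * ‖trE E (Dpow H C s k)‖ := by
        rw [norm_mul, Real.norm_eq_abs, abs_inv, Nat.abs_cast, Real.norm_eq_abs]
    _ ≤ (k.factorial : ℝ)⁻¹ * (‖trE E‖ * (k * K ^ (k - 1) * ‖C‖)) := by
        apply mul_le_mul_of_nonneg_left _ hfac
        exact le_trans hb (mul_le_mul_of_nonneg_left hD (norm_nonneg _))
    _ = ‖trE E‖ * ‖C‖ * ((k.factorial : ℝ)⁻¹ * (k * K ^ (k - 1))) := by ring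

/-- The derivative series for `E = 1` sums to `Tr(e^X C).re`. -/
lemma D1_eq [Nonempty n] (H C : Matrix n n ℂ) (s : ℝ) :
    ∑' k, (k.factorial : ℝ)⁻¹ * trE 1 (Dpow H C s k)
      = trE C (NormedSpace.exp (Xl H C s)) := by
  set X := Xl H C s with hX
  have hterm : ∀ k : ℕ, trE 1 (Dpow H C s k) = k * trE C (X ^ (k - 1)) := by
    intro k
    rw [trE_apply, Matrix.mul_one, Dpow, Matrix.trace_sum, Complex.re_sum]
    have h8 : ∀ j ∈ Finset.range k, (X ^ j * C * X ^ (k - 1 - j)).trace.re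
        = (X ^ (k - 1) * C).trace.re := by
      intro j hj
      rw [Finset.mem_range] at hj
      rw [Matrix.trace_mul_cycle, ← pow_add]
      have he : k - 1 - j + j = k - 1 := by omega
      rw [he]
    rw [Finset.sum_congr rfl h8, Finset.sum_const, Finset.card_range, nsmul_eq_mul, trE_apply]
  have hsum : Summable (fun k : ℕ => (k.factorial : ℝ)⁻¹ * (k * trE C (X ^ (k - 1)))) := by
    have h := summable_trE_Dpow 1 H C s
    apply h.congr
    intro k
    rw [hterm k]
  calc ∑' k : ℕ, (k.factorial : ℝ)⁻¹ * trE 1 (Dpow H C s k)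
      = ∑' k : ℕ, (k.factorial : ℝ)⁻¹ * ((k : ℝ) * trE C (X ^ (k - 1))) :=
        tsum_congr fun k => by rw [hterm k]
    _ = trE C (NormedSpace.exp X) := by
        rw [Summable.tsum_eq_zero_add hsum]
        simp only [Nat.factorial_zero, Nat.cast_zero, zero_mul, mul_zero, zero_add]
        rw [trE_exp C X]
        apply tsum_congr
        intro k
        have he : k + 1 - 1 = k := rfl
        rw [he]
        have hk : (((k + 1).factorial : ℝ)) = ((k : ℝ) + 1) * (k.factorial : ℝ) := by
          rw [Nat.factorial_succ]
          push_cast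
          ring
        rw [hk]
        have h1 : ((k : ℝ) + 1) ≠ 0 := by positivity
        have h2 : (k.factorial : ℝ) ≠ 0 := Nat.cast_ne_zero.mpr k.factorial_ne_zero
        push_cast
        field_simp

lemma mlog_eq {A : Matrix n n ℂ} (hA : A.PosDef) :
    mlog A = (hA.1.eigenvectorUnitary : Matrix n n ℂ)
      * diagonal (fun i => ((Real.log (hA.1.eigenvalues i) : ℝ) : ℂ))
      * star (hA.1.eigenvectorUnitary : Matrix n n ℂ) := by
  rw [mlog, dif_pos hA.1]
  rfl

lemma conj_diag_isHermitian (V : Matrix n n ℂ) (f : n → ℝ) :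
    (V * diagonal (fun i => ((f i : ℝ) : ℂ)) * star V).IsHermitian := by
  rw [Matrix.IsHermitian, Matrix.star_eq_conjTranspose, Matrix.conjTranspose_mul,
    Matrix.conjTranspose_mul, Matrix.conjTranspose_conjTranspose, Matrix.diagonal_conjTranspose]
  have h : star (fun i => ((f i : ℝ) : ℂ)) = fun i => ((f i : ℝ) : ℂ) := by
    funext i
    simp [Pi.star_apply, Complex.star_def, Complex.conj_ofReal]
  rw [h, Matrix.mul_assoc]

lemma mlog_isHermitian {A : Matrix n n ℂ} (hA : A.PosDef) : (mlog A).IsHermitian := by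
  rw [mlog_eq hA]
  exact conj_diag_isHermitian _ _

lemma exp_mlog {A : Matrix n n ℂ} (hA : A.PosDef) : NormedSpace.exp (mlog A) = A := by
  rw [mlog_eq hA]
  set V : Matrix n n ℂ := (hA.1.eigenvectorUnitary : Matrix n n ℂ) with hV
  have hV1 : star V * V = 1 := (Matrix.mem_unitaryGroup_iff').mp hA.1.eigenvectorUnitary.2
  have hV2 : V * star V = 1 := (Matrix.mem_unitaryGroup_iff).mp hA.1.eigenvectorUnitary.2
  have hU : IsUnit V := ⟨⟨V, star V, hV2, hV1⟩, rfl⟩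
  have hinv : V⁻¹ = star V := Matrix.inv_eq_right_inv hV2
  have hd : (NormedSpace.exp fun i => ((Real.log (hA.1.eigenvalues i) : ℝ) : ℂ))
      = fun i => ((hA.1.eigenvalues i : ℝ) : ℂ) := by
    rw [Pi.exp_def]
    funext i
    rw [← Complex.exp_eq_exp_ℂ, ← Complex.ofReal_exp, Real.exp_log (hA.eigenvalues_pos i)]
  rw [← hinv, Matrix.exp_conj V _ hU, Matrix.exp_diagonal, hd, hinv]
  have h := hA.1.spectral_theorem
  rw [Unitary.conjStarAlgAut_apply] at h
  exact h.symm

-- trace positivity facts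
lemma posdef_diag_re_pos {M : Matrix n n ℂ} (hM : M.PosDef) (i : n) : 0 < (M i i).re := by
  have hx : (Pi.single i 1 : n → ℂ) ≠ 0 := by
    intro h
    have := congrFun h i
    simp [Pi.single_apply] at this
  have h2 : (0 : ℂ) < M i i := hM.diag_pos
  rw [Complex.lt_def] at h2
  simpa using h2.1

lemma herm_diag_im_zero {M : Matrix n n ℂ} (hM : M.IsHermitian) (i : n) : (M i i).im = 0 := by
  have h := congrFun (congrFun hM.eq i) i
  rw [Matrix.conjTranspose_apply] at h
  have := Complex.conj_eq_iff_im.mp (by simpa [Complex.star_def] using h)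
  exact this

lemma posdef_trace_re_pos [Nonempty n] {M : Matrix n n ℂ} (hM : M.PosDef) : 0 < M.trace.re := by
  rw [Matrix.trace, Complex.re_sum]
  exact Finset.sum_pos (fun i _ => posdef_diag_re_pos hM i) Finset.univ_nonempty

lemma herm_trace_im_zero {M : Matrix n n ℂ} (hM : M.IsHermitian) : M.trace.im = 0 := by
  rw [Matrix.trace, Complex.im_sum]
  exact Finset.sum_eq_zero fun i _ => herm_diag_im_zero hM i


end MMWUAux

set_option maxHeartbeats 1000000 in
/-- MMWU trace upper-bound step: with `A_j = exp (log A_{j-1} + μ C)` for `0 ⪯ C ⪯ I` and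
`μ > 0`, one has `log (Tr A_j / Tr A_{j-1}) ≤ μ e^μ Tr (ρ_{j-1} C)` where
`ρ_{j-1} = A_{j-1} / Tr A_{j-1}`. -/
theorem mmwu_log_trace_ratio_upper_bound {n : Type*} [Fintype n] [DecidableEq n]
    (Aprev : Matrix n n ℂ) (hAprev : Aprev.PosDef)
    (C : Matrix n n ℂ) (hC : C.IsHermitian)
    (hC0 : C.PosSemidef) (hC1 : ((1 : Matrix n n ℂ) - C).PosSemidef)
    (μ : ℝ) (hμ : 0 < μ)
    (Aj : Matrix n n ℂ) (hAj : Aj = NormedSpace.exp (mlog Aprev + (μ : ℂ) • C))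
    (ρprev : Matrix n n ℂ) (hρprev : ρprev = (Aprev.trace)⁻¹ • Aprev) :
    Real.log ((Aj.trace).re / (Aprev.trace).re)
      ≤ μ * Real.exp μ * ((ρprev * C).trace).re := by
  rcases isEmpty_or_nonempty n with hn | hn
  · have h1 : Aj.trace = 0 := by rw [Matrix.trace, Finset.univ_eq_empty, Finset.sum_empty]
    have h2 : Aprev.trace = 0 := by rw [Matrix.trace, Finset.univ_eq_empty, Finset.sum_empty]
    have h3 : (ρprev * C).trace = 0 := by rw [Matrix.trace, Finset.univ_eq_empty, Finset.sum_empty]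
    rw [h1, h2, h3]
    simp [Real.log_zero]
  letI := Matrix.linftyOpNormedAddCommGroup (α := ℂ) (m := n) (n := n)
  letI := Matrix.linftyOpNormedRing (α := ℂ) (n := n)
  letI := Matrix.linftyOpNormedAlgebra (R := ℝ) (α := ℂ) (n := n)
  set H : Matrix n n ℂ := mlog Aprev with hH
  have hHh : H.IsHermitian := mlog_isHermitian hAprev
  set F : ℝ → ℝ := fun s => trE 1 (NormedSpace.exp (Xl H C s)) with hF
  set h : ℝ → ℝ := fun s => trE C (NormedSpace.exp (Xl H C s)) with hh
  set D2 : ℝ → ℝ := fun s => ∑' k, (k.factorial : ℝ)⁻¹ * trE C (Dpow H C s k) with hD2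
  have hF' : ∀ s, HasDerivAt F (h s) s := by
    intro s
    have := hasDerivAt_trE_exp H C 1 s
    rwa [D1_eq H C s] at this
  have hh' : ∀ s, HasDerivAt h (D2 s) s := fun s => hasDerivAt_trE_exp H C C s
  have hhnn : ∀ s, 0 ≤ h s := fun s => (spectral_bounds hHh hC hC0 hC1 s).1
  have hD2le : ∀ s, D2 s ≤ h s := fun s => (spectral_bounds hHh hC hC0 hC1 s).2
  -- Gronwall: h s ≤ exp s * h 0 for s ≥ 0
  have hgron : ∀ s : ℝ, 0 ≤ s → h s ≤ Real.exp s * h 0 := by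
    intro s hs
    have hanti : AntitoneOn (fun t => Real.exp (-t) * h t) (Set.Ici 0) := by
      apply antitoneOn_of_deriv_nonpos (convex_Ici 0)
      · apply Continuous.continuousOn
        have hdh : Differentiable ℝ h := fun t => (hh' t).differentiableAt
        exact (Real.continuous_exp.comp continuous_neg).mul hdh.continuous
      · intro t ht
        apply DifferentiableAt.differentiableWithinAt
        exact (((Real.hasDerivAt_exp (-t)).comp t (hasDerivAt_neg t)).mul (hh' t)).differentiableAt
      · intro t ht
        have hder : HasDerivAt (fun t => Real.exp (-t) * h t)
            (Real.exp (-t) * (-1) * h t + Real.exp (-t) * D2 t) t :=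
          ((Real.hasDerivAt_exp (-t)).comp t (hasDerivAt_neg t)).mul (hh' t)
        rw [hder.deriv]
        have h1 := hD2le t
        have h2 := Real.exp_pos (-t)
        nlinarith
    have h3 := hanti Set.self_mem_Ici (Set.mem_Ici.mpr hs) hs
    simp only [neg_zero, Real.exp_zero, one_mul] at h3
    have h4 := Real.exp_pos s
    calc h s = Real.exp s * (Real.exp (-s) * h s) := by
          rw [← mul_assoc, ← Real.exp_add]
          simp
      _ ≤ Real.exp s * h 0 := mul_le_mul_of_nonneg_left h3 h4.le
  -- F μ ≤ F 0 + (e^μ - 1) h 0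
  have hFbound : F μ ≤ F 0 + (Real.exp μ - 1) * h 0 := by
    have hmono : MonotoneOn (fun t => F 0 + (Real.exp t - 1) * h 0 - F t) (Set.Icc 0 μ) := by
      apply monotoneOn_of_deriv_nonneg (convex_Icc 0 μ)
      · apply Continuous.continuousOn
        have hdF : Differentiable ℝ F := fun t => (hF' t).differentiableAt
        have hconst : Continuous fun t : ℝ => F 0 + (Real.exp t - 1) * h 0 :=
          continuous_const.add ((Real.continuous_exp.sub continuous_const).mul continuous_const)
        exact hconst.sub hdF.continuous
      · intro t ht
        apply DifferentiableAt.differentiableWithinAt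
        apply DifferentiableAt.sub _ (hF' t).differentiableAt
        apply DifferentiableAt.const_add
        exact (((Real.differentiable_exp t).sub_const 1).mul_const (h 0))
      · intro t ht
        rw [interior_Icc] at ht
        have hder : HasDerivAt (fun t => F 0 + (Real.exp t - 1) * h 0 - F t)
            (Real.exp t * h 0 - h t) t := by
          have := ((((Real.hasDerivAt_exp t).sub_const 1).mul_const (h 0)).const_add (F 0)).sub
            (hF' t)
          exact this
        rw [hder.deriv]
        have := hgron t ht.1.le
        linarith
    have h5 := hmono (Set.mem_Icc.mpr ⟨le_refl 0, hμ.le⟩) (Set.mem_Icc.mpr ⟨hμ.le, le_refl μ⟩) hμ.le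
    simp only [Real.exp_zero, sub_self, zero_mul, add_zero] at h5
    linarith
  -- F monotone: F 0 ≤ F μ
  have hFmono : F 0 ≤ F μ := by
    have hmono : MonotoneOn F (Set.Icc 0 μ) := by
      apply monotoneOn_of_deriv_nonneg (convex_Icc 0 μ)
      · apply Continuous.continuousOn
        exact Differentiable.continuous fun t => (hF' t).differentiableAt
      · intro t ht
        exact ((hF' t).differentiableAt).differentiableWithinAt
      · intro t ht
        rw [(hF' t).deriv]
        exact hhnn t
    exact hmono (Set.mem_Icc.mpr ⟨le_refl 0, hμ.le⟩) (Set.mem_Icc.mpr ⟨hμ.le, le_refl μ⟩) hμ.le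
  -- identifications
  have hX0 : Xl H C 0 = H := by rw [Xl, zero_smul, add_zero]
  have hF0 : F 0 = Aprev.trace.re := by
    rw [hF]
    simp only []
    rw [hX0, exp_mlog hAprev, trE_apply, Matrix.mul_one]
  have hh0 : h 0 = ((Aprev * C).trace).re := by
    rw [hh]
    simp only []
    rw [hX0, exp_mlog hAprev, trE_apply]
  have hFμ : F μ = Aj.trace.re := by
    have harg : mlog Aprev + (μ : ℂ) • C = Xl H C μ := by
      rw [Xl, hH]
      ext i j
      simp [Matrix.add_apply, Matrix.smul_apply, Complex.real_smul]
    rw [hF]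
    simp only []
    rw [← harg, ← hAj, trE_apply, Matrix.mul_one]
  set t : ℝ := Aprev.trace.re with ht
  set c : ℝ := ((Aprev * C).trace).re with hc
  have htpos : 0 < t := posdef_trace_re_pos hAprev
  have hcnn : 0 ≤ c := by rw [← hh0]; exact hhnn 0
  -- RHS identification
  have hRHS : ((ρprev * C).trace).re = t⁻¹ * c := by
    rw [hρprev, Matrix.smul_mul, Matrix.trace_smul, smul_eq_mul]
    have htr : Aprev.trace = (t : ℂ) := by
      apply Complex.ext
      · simp [ht]
      · simp [herm_trace_im_zero hAprev.1]
    rw [htr, ← Complex.ofReal_inv, Complex.re_ofReal_mul, hc]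
  rw [hRHS]
  -- final chain
  have hFμpos : 0 < Aj.trace.re := by rw [← hFμ]; linarith [hFmono, hF0 ▸ htpos]
  have hkey : Aj.trace.re ≤ t + (Real.exp μ - 1) * c := by
    rw [← hFμ]
    calc F μ ≤ F 0 + (Real.exp μ - 1) * h 0 := hFbound
      _ = t + (Real.exp μ - 1) * c := by rw [hF0, hh0]
  have hstep1 : Real.log (Aj.trace.re / t) ≤ Real.log (1 + (Real.exp μ - 1) * (c / t)) := by
    apply Real.log_le_log (div_pos hFμpos htpos)
    rw [div_le_iff₀ htpos]
    have hexp1 : (1 : ℝ) ≤ Real.exp μ := by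
      rw [← Real.exp_zero]
      exact Real.exp_le_exp.mpr hμ.le
    calc Aj.trace.re ≤ t + (Real.exp μ - 1) * c := hkey
      _ = (1 + (Real.exp μ - 1) * (c / t)) * t := by field_simp
  have hstep2 : Real.log (1 + (Real.exp μ - 1) * (c / t)) ≤ (Real.exp μ - 1) * (c / t) := by
    have hpos : 0 < 1 + (Real.exp μ - 1) * (c / t) := by
      have : 0 ≤ (Real.exp μ - 1) * (c / t) := by
        apply mul_nonneg
        · have : (1 : ℝ) ≤ Real.exp μ := by
            rw [← Real.exp_zero]; exact Real.exp_le_exp.mpr hμ.le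
          linarith
        · positivity
      linarith
    have := Real.log_le_sub_one_of_pos hpos
    linarith
  have hstep3 : (Real.exp μ - 1) * (c / t) ≤ μ * Real.exp μ * (t⁻¹ * c) := by
    have hE : Real.exp μ - 1 ≤ μ * Real.exp μ := by
      have h1 := Real.add_one_le_exp (-μ)
      have h2 := Real.exp_pos μ
      have h3 : Real.exp (-μ) * Real.exp μ = 1 := by rw [← Real.exp_add]; simp
      nlinarith
    have hct : 0 ≤ c / t := by positivity
    calc (Real.exp μ - 1) * (c / t) ≤ (μ * Real.exp μ) * (c / t) :=
          mul_le_mul_of_nonneg_right hE hct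
      _ = μ * Real.exp μ * (t⁻¹ * c) := by rw [div_eq_inv_mul]
  calc Real.log (Aj.trace.re / t) ≤ Real.log (1 + (Real.exp μ - 1) * (c / t)) := hstep1
    _ ≤ (Real.exp μ - 1) * (c / t) := hstep2
    _ ≤ μ * Real.exp μ * (t⁻¹ * c) := hstep3
end

section
/- Let ρ*, σ* be fixed positive definite density matrices and let ρ(t), σ(t) be differentiable trajectories of positive definite density matrices satisfying, under the commutativity assumption, dρ/dt = ρ(Φ(σ) − Tr(ρΦ(σ))I) and dσ/dt = σ(−Φ†(ρ) + Tr(σΦ†(ρ))I), where ρ(t) commutes with Φ(σ(t)) and σ(t) commutes with Φ†(ρ(t)), the fully-mixed equilibrium conditions Tr(ρ*Φ(σ)) = Tr(ρ*Φ(σ*)) and Tr(σ*Φ†(ρ)) = Tr(σ*Φ†(ρ*)) hold for all ρ, σ, and Tr(ρ*Φ(σ*)) = Tr(σ*Φ†(ρ*)). Then d/dt [S(ρ*‖ρ(t)) + S(σ*‖σ(t))] = 0. -/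
open Matrix
open scoped ComplexOrder

attribute [local instance] Matrix.frobeniusNormedAddCommGroup Matrix.frobeniusNormedSpace

section Aux
attribute [local instance] Matrix.frobeniusNormedRing Matrix.frobeniusNormedAlgebra
variable {n : Type*} [Fintype n] [DecidableEq n]

lemma conj_mul_conj {U : Matrix n n ℂ} (hU : star U * U = 1) (v w : n → ℂ) :
    (U * diagonal v * star U) * (U * diagonal w * star U)
      = U * diagonal (fun i => v i * w i) * star U := by
  have h : (U * diagonal v * star U) * (U * diagonal w * star U)
      = U * (diagonal v * ((star U * U) * (diagonal w * star U))) := by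
    simp only [Matrix.mul_assoc]
  rw [h, hU, one_mul, ← Matrix.mul_assoc (diagonal v), diagonal_mul_diagonal,
    Matrix.mul_assoc]

variable {X : Matrix n n ℂ}

lemma posdef_spectral (hX : X.PosDef) :
    X = (hX.1.eigenvectorUnitary : Matrix n n ℂ)
      * diagonal (fun i => ((hX.1.eigenvalues i : ℝ) : ℂ))
      * star (hX.1.eigenvectorUnitary : Matrix n n ℂ) :=
  hX.1.spectral_theorem

lemma unitary_mul_star (hX : X.PosDef) : (hX.1.eigenvectorUnitary : Matrix n n ℂ)
    * star (hX.1.eigenvectorUnitary : Matrix n n ℂ) = 1 :=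
  (Matrix.mem_unitaryGroup_iff).mp (hX.1.eigenvectorUnitary).2

lemma star_mul_unitary (hX : X.PosDef) : star (hX.1.eigenvectorUnitary : Matrix n n ℂ)
    * (hX.1.eigenvectorUnitary : Matrix n n ℂ) = 1 :=
  (Matrix.mem_unitaryGroup_iff').mp (hX.1.eigenvectorUnitary).2

lemma sub_one_spectral (hX : X.PosDef) :
    X - 1 = (hX.1.eigenvectorUnitary : Matrix n n ℂ)
      * diagonal (fun i => ((hX.1.eigenvalues i - 1 : ℝ) : ℂ))
      * star (hX.1.eigenvectorUnitary : Matrix n n ℂ) := by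
  set U := (hX.1.eigenvectorUnitary : Matrix n n ℂ) with hUdef
  have h1 : (1 : Matrix n n ℂ) = U * diagonal (fun _ => 1) * star U := by
    rw [diagonal_one, mul_one, unitary_mul_star hX]
  have hd : (diagonal fun i => ((hX.1.eigenvalues i - 1 : ℝ) : ℂ))
      = diagonal (fun i => ((hX.1.eigenvalues i : ℝ) : ℂ)) - diagonal (fun _ => 1) := by
    rw [diagonal_sub]
    refine congrArg diagonal (funext fun i => ?_)
    push_cast
    ring
  rw [hd, Matrix.mul_sub, Matrix.sub_mul, ← h1, ← posdef_spectral hX]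

lemma one_add_smul_spectral (hX : X.PosDef) (u : ℝ) :
    1 + u • (X - 1) = (hX.1.eigenvectorUnitary : Matrix n n ℂ)
      * diagonal (fun i => ((1 - u + u * hX.1.eigenvalues i : ℝ) : ℂ))
      * star (hX.1.eigenvectorUnitary : Matrix n n ℂ) := by
  set U := (hX.1.eigenvectorUnitary : Matrix n n ℂ) with hUdef
  have h1 : (1 : Matrix n n ℂ) = U * diagonal (fun _ => 1) * star U := by
    rw [diagonal_one, mul_one, unitary_mul_star hX]
  have hd : (diagonal fun i => ((1 - u + u * hX.1.eigenvalues i : ℝ) : ℂ))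
      = diagonal (fun _ => 1) + u • diagonal (fun i => ((hX.1.eigenvalues i - 1 : ℝ) : ℂ)) := by
    rw [← diagonal_smul, diagonal_add]
    refine congrArg diagonal (funext fun i => ?_)
    simp only [Pi.smul_apply, Complex.real_smul]
    push_cast
    ring
  rw [hd, Matrix.mul_add, Matrix.add_mul, mul_smul_comm, smul_mul_assoc, ← h1,
    ← sub_one_spectral hX]

lemma eigen_combo_pos (hX : X.PosDef) {u : ℝ} (h0 : 0 ≤ u) (h1 : u ≤ 1) (i : n) :
    0 < 1 - u + u * hX.1.eigenvalues i := by
  have hE := hX.eigenvalues_pos i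
  rcases eq_or_lt_of_le h1 with h | h
  · rw [h]; simpa using hE
  · nlinarith [mul_nonneg h0 hE.le]

lemma one_add_smul_inv (hX : X.PosDef) {u : ℝ} (h0 : 0 ≤ u) (h1 : u ≤ 1) :
    (1 + u • (X - 1))⁻¹ = (hX.1.eigenvectorUnitary : Matrix n n ℂ)
      * diagonal (fun i => (((1 - u + u * hX.1.eigenvalues i)⁻¹ : ℝ) : ℂ))
      * star (hX.1.eigenvectorUnitary : Matrix n n ℂ) := by
  apply Matrix.inv_eq_right_inv
  rw [one_add_smul_spectral hX u, conj_mul_conj (star_mul_unitary hX)]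
  have h : (fun i => ((1 - u + u * hX.1.eigenvalues i : ℝ) : ℂ)
      * (((1 - u + u * hX.1.eigenvalues i)⁻¹ : ℝ) : ℂ)) = fun _ => (1 : ℂ) := by
    funext i
    rw [← Complex.ofReal_mul, mul_inv_cancel₀ (eigen_combo_pos hX h0 h1 i).ne']
    norm_num
  rw [h, diagonal_one, mul_one, unitary_mul_star hX]

lemma one_add_smul_isUnit (hX : X.PosDef) {u : ℝ} (h0 : 0 ≤ u) (h1 : u ≤ 1) :
    IsUnit (1 + u • (X - 1)) := by
  have hmul : (1 + u • (X - 1)) * ((hX.1.eigenvectorUnitary : Matrix n n ℂ)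
      * diagonal (fun i => (((1 - u + u * hX.1.eigenvalues i)⁻¹ : ℝ) : ℂ))
      * star (hX.1.eigenvectorUnitary : Matrix n n ℂ)) = 1 := by
    rw [one_add_smul_spectral hX u, conj_mul_conj (star_mul_unitary hX)]
    have h : (fun i => ((1 - u + u * hX.1.eigenvalues i : ℝ) : ℂ)
        * (((1 - u + u * hX.1.eigenvalues i)⁻¹ : ℝ) : ℂ)) = fun _ => (1 : ℂ) := by
      funext i
      rw [← Complex.ofReal_mul, mul_inv_cancel₀ (eigen_combo_pos hX h0 h1 i).ne']
      norm_num
    rw [h, diagonal_one, mul_one, unitary_mul_star hX]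
  haveI := invertibleOfRightInverse _ _ hmul
  exact isUnit_of_invertible _

lemma res_spectral (hX : X.PosDef) {u : ℝ} (h0 : 0 ≤ u) (h1 : u ≤ 1) :
    (X - 1) * (1 + u • (X - 1))⁻¹ = (hX.1.eigenvectorUnitary : Matrix n n ℂ)
      * diagonal (fun i =>
          (((hX.1.eigenvalues i - 1) / (1 - u + u * hX.1.eigenvalues i) : ℝ) : ℂ))
      * star (hX.1.eigenvectorUnitary : Matrix n n ℂ) := by
  rw [one_add_smul_inv hX h0 h1, sub_one_spectral hX,
    conj_mul_conj (star_mul_unitary hX)]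
  have h : (fun i => ((hX.1.eigenvalues i - 1 : ℝ) : ℂ)
      * (((1 - u + u * hX.1.eigenvalues i)⁻¹ : ℝ) : ℂ))
      = fun i => (((hX.1.eigenvalues i - 1) / (1 - u + u * hX.1.eigenvalues i) : ℝ) : ℂ) := by
    funext i
    rw [← Complex.ofReal_mul, div_eq_mul_inv]
  rw [h]

lemma mlog_spectral (hX : X.PosDef) :
    mlog X = (hX.1.eigenvectorUnitary : Matrix n n ℂ)
      * diagonal (fun i => ((Real.log (hX.1.eigenvalues i) : ℝ) : ℂ))
      * star (hX.1.eigenvectorUnitary : Matrix n n ℂ) := by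
  rw [mlog, dif_pos hX.1]
  rfl

lemma trace_conj_diag (B : Matrix n n ℂ) (U : Matrix n n ℂ) (v : n → ℂ) :
    (B * (U * diagonal v * star U)).trace
      = ∑ i, (star U * B * U) i i * v i := by
  have h : B * (U * diagonal v * star U) = (B * U) * diagonal v * star U := by
    simp only [Matrix.mul_assoc]
  rw [h, Matrix.trace_mul_cycle, ← Matrix.mul_assoc, Matrix.trace]
  congr 1
  funext i
  rw [Matrix.diag]
  rw [Matrix.mul_diagonal]


lemma scalar_log_integral {l : ℝ} (hl : 0 < l) :
    ∫ u in (0:ℝ)..1, (l - 1) / (1 - u + u * l) = Real.log l := by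
  have hpos : ∀ u ∈ Set.uIcc (0:ℝ) 1, 0 < 1 - u + u * l := by
    intro u hu
    rw [Set.uIcc_of_le (by norm_num : (0:ℝ) ≤ 1)] at hu
    obtain ⟨h0, h1⟩ := hu
    rcases eq_or_lt_of_le h1 with h | h
    · rw [h]; simpa using hl
    · nlinarith [mul_nonneg h0 hl.le]
  have hderiv : ∀ u ∈ Set.uIcc (0:ℝ) 1,
      HasDerivAt (fun u => Real.log (1 - u + u * l)) ((l - 1) / (1 - u + u * l)) u := by
    intro u hu
    have h1 : HasDerivAt (fun u : ℝ => 1 - u + u * l) (l - 1) u := by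
      have h := ((hasDerivAt_const u (1:ℝ)).sub (hasDerivAt_id u)).add
        ((hasDerivAt_id u).mul_const l)
      exact h.congr_deriv (by ring)
    have := (Real.hasDerivAt_log (hpos u hu).ne').comp u h1
    simpa [div_eq_inv_mul, mul_comm, Function.comp_def] using this
  have hint : IntervalIntegrable (fun u => (l - 1) / (1 - u + u * l))
      MeasureTheory.volume 0 1 := by
    apply ContinuousOn.intervalIntegrable
    apply ContinuousOn.div continuousOn_const (by fun_prop)
    intro u hu; exact (hpos u hu).ne'
  have := intervalIntegral.integral_eq_sub_of_hasDerivAt hderiv hint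
  rw [this]
  norm_num

lemma trace_mlog_eq_integral (B : Matrix n n ℂ) {X : Matrix n n ℂ} (hX : X.PosDef) :
    (B * mlog X).trace
      = ∫ u in (0:ℝ)..1, (B * ((X - 1) * (1 + u • (X - 1))⁻¹)).trace := by
  have hcong : Set.EqOn (fun u : ℝ => (B * ((X - 1) * (1 + u • (X - 1))⁻¹)).trace)
      (fun u : ℝ => ∑ i, (star (hX.1.eigenvectorUnitary : Matrix n n ℂ) * B
          * (hX.1.eigenvectorUnitary : Matrix n n ℂ)) i i
        * (((hX.1.eigenvalues i - 1) / (1 - u + u * hX.1.eigenvalues i) : ℝ) : ℂ))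
      (Set.uIcc 0 1) := by
    intro u hu
    rw [Set.uIcc_of_le (by norm_num : (0:ℝ) ≤ 1)] at hu
    simp only
    rw [res_spectral hX hu.1 hu.2, trace_conj_diag]
  have hint : ∀ i ∈ Finset.univ, IntervalIntegrable
      (fun u : ℝ => (star (hX.1.eigenvectorUnitary : Matrix n n ℂ) * B
          * (hX.1.eigenvectorUnitary : Matrix n n ℂ)) i i
        * (((hX.1.eigenvalues i - 1) / (1 - u + u * hX.1.eigenvalues i) : ℝ) : ℂ))
      MeasureTheory.volume (0:ℝ) 1 := by
    intro i _
    apply ContinuousOn.intervalIntegrable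
    refine ContinuousOn.mul continuousOn_const ?_
    refine Continuous.comp_continuousOn Complex.continuous_ofReal ?_
    refine ContinuousOn.div continuousOn_const (by fun_prop) ?_
    intro u hu
    rw [Set.uIcc_of_le (by norm_num : (0:ℝ) ≤ 1)] at hu
    exact (eigen_combo_pos hX hu.1 hu.2 i).ne'
  rw [intervalIntegral.integral_congr hcong, intervalIntegral.integral_finset_sum hint,
    mlog_spectral hX, trace_conj_diag]
  refine Finset.sum_congr rfl fun i _ => ?_
  have hsm : (fun u : ℝ => (star (hX.1.eigenvectorUnitary : Matrix n n ℂ) * B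
          * (hX.1.eigenvectorUnitary : Matrix n n ℂ)) i i
        * (((hX.1.eigenvalues i - 1) / (1 - u + u * hX.1.eigenvalues i) : ℝ) : ℂ))
      = fun u : ℝ => (star (hX.1.eigenvectorUnitary : Matrix n n ℂ) * B
          * (hX.1.eigenvectorUnitary : Matrix n n ℂ)) i i
        • ((((hX.1.eigenvalues i - 1) / (1 - u + u * hX.1.eigenvalues i) : ℝ)) : ℂ) := rfl
  rw [hsm, intervalIntegral.integral_smul, intervalIntegral.integral_ofReal,
    scalar_log_integral (hX.eigenvalues_pos i)]
  rfl


lemma comm_nonsing_inv {A C : Matrix n n ℂ} (h : A * C = C * A) (hC : IsUnit C) :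
    A * C⁻¹ = C⁻¹ * A := by
  have hd : IsUnit C.det := (Matrix.isUnit_iff_isUnit_det C).mp hC
  calc A * C⁻¹ = C⁻¹ * C * (A * C⁻¹) := by rw [Matrix.nonsing_inv_mul _ hd, one_mul]
    _ = C⁻¹ * (C * A) * C⁻¹ := by simp only [Matrix.mul_assoc]
    _ = C⁻¹ * (A * C) * C⁻¹ := by rw [h]
    _ = C⁻¹ * A * (C * C⁻¹) := by simp only [Matrix.mul_assoc]
    _ = C⁻¹ * A := by rw [Matrix.mul_nonsing_inv _ hd, mul_one]

lemma hasDerivAt_matrix_inv {X : ℝ → Matrix n n ℂ} {X' : Matrix n n ℂ} {t : ℝ}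
    (h : HasDerivAt X X' t) (hX : IsUnit (X t)) :
    HasDerivAt (fun s => (X s)⁻¹) (-((X t)⁻¹ * X' * (X t)⁻¹)) t := by
  have hcoe : (↑hX.unit⁻¹ : Matrix n n ℂ) = (X t)⁻¹ := by
    rw [Matrix.coe_units_inv, hX.unit_spec]
  have h2 := hasFDerivAt_ringInverse (𝕜 := ℝ) hX.unit
  rw [hX.unit_spec] at h2
  have h1 := h2.comp_hasDerivAt t h
  have he : (fun s => (X s)⁻¹) = fun s => Ring.inverse (X s) := by
    funext s; rw [Matrix.nonsing_inv_eq_ringInverse]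
  rw [he]
  rw [ContinuousLinearMap.neg_apply, ContinuousLinearMap.mulLeftRight_apply, hcoe] at h1
  exact h1


noncomputable def traceMulCLM (B : Matrix n n ℂ) : Matrix n n ℂ →L[ℝ] ℂ :=
  LinearMap.toContinuousLinearMap
    (((Matrix.traceLinearMap n ℂ ℂ).restrictScalars ℝ).comp
      ((LinearMap.mulLeft ℂ B).restrictScalars ℝ))

lemma traceMulCLM_apply (B M : Matrix n n ℂ) : traceMulCLM B M = (B * M).trace := rfl

lemma step_a {D W : Matrix n n ℂ} (hDW : D * W = W * D) (hu : IsUnit (1 + W)) :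
    D * (1 + W)⁻¹ + W * -((1 + W)⁻¹ * (D * (1 + W)⁻¹))
      = D * ((1 + W)⁻¹ * (1 + W)⁻¹) := by
  set R := (1 + W)⁻¹ with hR
  have hdet : IsUnit (1 + W).det := (Matrix.isUnit_iff_isUnit_det _).mp hu
  have hDR : D * R = R * D :=
    comm_nonsing_inv (by rw [mul_add, add_mul, mul_one, one_mul, hDW]) hu
  have hR1 : (1 + W) * R = 1 := Matrix.mul_nonsing_inv _ hdet
  have hWR1 : W * R = 1 - R := by
    have h := hR1
    rw [Matrix.add_mul, Matrix.one_mul] at h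
    exact eq_sub_of_add_eq' h
  calc D * R + W * -(R * (D * R))
      = D * R - W * (R * (D * R)) := by rw [mul_neg, ← sub_eq_add_neg]
    _ = D * R - W * (D * (R * R)) := by rw [← Matrix.mul_assoc R D R, ← hDR, Matrix.mul_assoc]
    _ = D * R - D * (W * (R * R)) := by
        rw [← Matrix.mul_assoc W D, ← hDW, Matrix.mul_assoc]
    _ = D * R - D * ((1 - R) * R) := by rw [← Matrix.mul_assoc W R R, hWR1]
    _ = D * (R * R) := by rw [Matrix.sub_mul, Matrix.one_mul, Matrix.mul_sub, sub_sub_cancel]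

lemma step_b {W : Matrix n n ℂ} (hu : IsUnit (1 + W)) :
    (1 + W)⁻¹ - (1 + W)⁻¹ * (W * (1 + W)⁻¹) = (1 + W)⁻¹ * (1 + W)⁻¹ := by
  set R := (1 + W)⁻¹ with hR
  have hdet : IsUnit (1 + W).det := (Matrix.isUnit_iff_isUnit_det _).mp hu
  have hR1 : (1 + W) * R = 1 := Matrix.mul_nonsing_inv _ hdet
  have hWR1 : W * R = 1 - R := by
    have h := hR1
    rw [Matrix.add_mul, Matrix.one_mul] at h
    exact eq_sub_of_add_eq' h
  rw [hWR1, Matrix.mul_sub, mul_one, sub_sub_cancel]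


lemma trace_mlog_hasDerivAt (B : Matrix n n ℂ) (ρ : ℝ → Matrix n n ℂ)
    (hρ : ∀ s, (ρ s).PosDef) (d : ℝ → Matrix n n ℂ)
    (hd : ∀ s, HasDerivAt ρ (d s) s) (hdc : Continuous d) (t : ℝ)
    (hcomm : d t * ρ t = ρ t * d t) :
    HasDerivAt (fun s => (B * mlog (ρ s)).trace) ((B * (d t * (ρ t)⁻¹)).trace) t := by
  have hρc : Continuous ρ := continuous_iff_continuousAt.mpr fun s => (hd s).continuousAt
  have hIoc : Set.uIoc (0:ℝ) 1 = Set.Ioc 0 1 := Set.uIoc_of_le (by norm_num)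
  have hIcc : Set.uIcc (0:ℝ) 1 = Set.Icc 0 1 := Set.uIcc_of_le (by norm_num)
  have hunit : ∀ s : ℝ, ∀ u ∈ Set.Icc (0:ℝ) 1, IsUnit (1 + u • (ρ s - 1)) :=
    fun s u hu => one_add_smul_isUnit (hρ s) hu.1 hu.2
  -- joint continuity of the resolvent
  have hRloc : ∀ p : ℝ × ℝ, p.2 ∈ Set.Icc (0:ℝ) 1 →
      ContinuousAt (fun q : ℝ × ℝ => (1 + q.2 • (ρ q.1 - 1))⁻¹) p := by
    intro p hp
    have hg : Continuous (fun q : ℝ × ℝ => 1 + q.2 • (ρ q.1 - 1)) :=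
      continuous_const.add (continuous_snd.smul ((hρc.comp continuous_fst).sub continuous_const))
    have hinv : ContinuousAt Ring.inverse ((1 + p.2 • (ρ p.1 - 1)) : Matrix n n ℂ) := by
      have h := NormedRing.inverse_continuousAt (hunit p.1 p.2 hp).unit
      rwa [IsUnit.unit_spec] at h
    have heq : (fun q : ℝ × ℝ => (1 + q.2 • (ρ q.1 - 1))⁻¹)
        = Ring.inverse ∘ (fun q : ℝ × ℝ => 1 + q.2 • (ρ q.1 - 1)) :=
      funext fun q => Matrix.nonsing_inv_eq_ringInverse _
    rw [heq]
    exact ContinuousAt.comp (x := p) hinv hg.continuousAt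
  -- joint continuity of F'
  have hGcont : ∀ p : ℝ × ℝ, p.2 ∈ Set.Icc (0:ℝ) 1 →
      ContinuousAt (fun q : ℝ × ℝ =>
        (B * (d q.1 * (1 + q.2 • (ρ q.1 - 1))⁻¹
          + (ρ q.1 - 1) * -((1 + q.2 • (ρ q.1 - 1))⁻¹ * (q.2 • d q.1)
              * (1 + q.2 • (ρ q.1 - 1))⁻¹))).trace) p := by
    intro p hp
    have hR := hRloc p hp
    have h1 : ContinuousAt (fun q : ℝ × ℝ => d q.1) p :=
      (hdc.comp continuous_fst).continuousAt
    have h2 : ContinuousAt (fun q : ℝ × ℝ => ρ q.1 - 1) p :=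
      ((hρc.comp continuous_fst).sub continuous_const).continuousAt
    have h3 : ContinuousAt (fun q : ℝ × ℝ => q.2 • d q.1) p :=
      continuous_snd.continuousAt.smul h1
    exact ((traceMulCLM B).continuous.continuousAt).comp
      ((h1.mul hR).add (h2.mul ((hR.mul h3).mul hR).neg))
  -- compact bound
  obtain ⟨C, hC⟩ := (IsCompact.exists_bound_of_continuousOn
    ((isCompact_Icc.prod isCompact_Icc :
      IsCompact (Set.Icc (t-1) (t+1) ×ˢ Set.Icc (0:ℝ) 1)))
    (fun p hp => (hGcont p hp.2).continuousWithinAt))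
  -- dominated-derivative theorem
  have key := intervalIntegral.hasDerivAt_integral_of_dominated_loc_of_deriv_le
    (F := fun s u => (B * ((ρ s - 1) * (1 + u • (ρ s - 1))⁻¹)).trace)
    (F' := fun s u => (B * (d s * (1 + u • (ρ s - 1))⁻¹
      + (ρ s - 1) * -((1 + u • (ρ s - 1))⁻¹ * (u • d s)
          * (1 + u • (ρ s - 1))⁻¹))).trace)
    (x₀ := t) (a := (0:ℝ)) (b := 1) (bound := fun _ => C)
    (μ := MeasureTheory.volume) (s := Metric.ball t 1) (Metric.ball_mem_nhds t one_pos)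
    ?_ ?_ ?_ ?_ ?_ ?_
  · have hfun : (fun s => (B * mlog (ρ s)).trace)
        = fun s => ∫ u in (0:ℝ)..1, (B * ((ρ s - 1) * (1 + u • (ρ s - 1))⁻¹)).trace :=
      funext fun s => trace_mlog_eq_integral B (hρ s)
    rw [hfun]
    have hDA : d t * (ρ t - 1) = (ρ t - 1) * d t := by
      rw [Matrix.mul_sub, Matrix.sub_mul, hcomm, mul_one, one_mul]
    have hψ : ∀ u ∈ Set.uIcc (0:ℝ) 1,
        HasDerivAt (fun u : ℝ => (B * (d t * (u • (1 + u • (ρ t - 1))⁻¹))).trace)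
          ((B * (d t * (1 + u • (ρ t - 1))⁻¹
            + (ρ t - 1) * -((1 + u • (ρ t - 1))⁻¹ * (u • d t)
                * (1 + u • (ρ t - 1))⁻¹))).trace) u := by
      intro u hu
      rw [hIcc] at hu
      have h2 : HasDerivAt (fun u : ℝ => 1 + u • (ρ t - 1)) (ρ t - 1) u := by
        have h := ((hasDerivAt_id u).smul_const (ρ t - 1)).const_add 1
        exact h.congr_deriv (by simp)
      have h3 := hasDerivAt_matrix_inv h2 (hunit t u hu)
      have h4 := (hasDerivAt_id u).smul h3
      have h5 := h4.const_mul (d t)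
      have h6 := ((traceMulCLM B).hasFDerivAt).comp_hasDerivAt u h5
      have hval : (B * (d t * (1 + u • (ρ t - 1))⁻¹
            + (ρ t - 1) * -((1 + u • (ρ t - 1))⁻¹ * (u • d t)
                * (1 + u • (ρ t - 1))⁻¹))).trace
          = traceMulCLM B (d t * (u • -((1 + u • (ρ t - 1))⁻¹ * (ρ t - 1)
              * (1 + u • (ρ t - 1))⁻¹) + (1:ℝ) • (1 + u • (ρ t - 1))⁻¹)) := by
        rw [traceMulCLM_apply]
        congr 1
        have hDW : d t * (u • (ρ t - 1)) = (u • (ρ t - 1)) * d t := by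
          rw [mul_smul_comm, smul_mul_assoc, hDA]
        have hsa := step_a hDW (hunit t u hu)
        have hsb := step_b (W := u • (ρ t - 1)) (hunit t u hu)
        have e1 : (ρ t - 1) * -((1 + u • (ρ t - 1))⁻¹ * (u • d t)
              * (1 + u • (ρ t - 1))⁻¹)
            = (u • (ρ t - 1)) * -((1 + u • (ρ t - 1))⁻¹
              * (d t * (1 + u • (ρ t - 1))⁻¹)) := by
          simp only [mul_neg, mul_smul_comm, smul_mul_assoc, Matrix.mul_assoc]
        have e2 : u • -((1 + u • (ρ t - 1))⁻¹ * (ρ t - 1) * (1 + u • (ρ t - 1))⁻¹)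
            = -((1 + u • (ρ t - 1))⁻¹ * ((u • (ρ t - 1)) * (1 + u • (ρ t - 1))⁻¹)) := by
          simp only [smul_neg, mul_smul_comm, smul_mul_assoc, Matrix.mul_assoc]
        rw [one_smul, e2, neg_add_eq_sub, hsb, e1, hsa]
      rw [hval]
      exact h6
    have hftc := intervalIntegral.integral_eq_sub_of_hasDerivAt hψ key.1
    have hval2 : (∫ u in (0:ℝ)..1, (B * (d t * (1 + u • (ρ t - 1))⁻¹
        + (ρ t - 1) * -((1 + u • (ρ t - 1))⁻¹ * (u • d t)
            * (1 + u • (ρ t - 1))⁻¹))).trace)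
        = (B * (d t * (ρ t)⁻¹)).trace := by
      rw [hftc]
      simp [add_sub_cancel]
    rw [← hval2]
    exact key.2
  · -- measurability of F x near t
    filter_upwards with s
    apply ContinuousOn.aestronglyMeasurable _ measurableSet_uIoc
    rw [hIoc]
    intro u hu
    have hu' : u ∈ Set.Icc (0:ℝ) 1 := Set.Ioc_subset_Icc_self hu
    have hR : ContinuousAt (fun u : ℝ => (1 + u • (ρ s - 1))⁻¹) u :=
      (hRloc (s, u) hu').comp (Continuous.continuousAt (Continuous.prodMk_right s))
    exact (((traceMulCLM B).continuous.continuousAt).comp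
      (continuousAt_const.mul hR)).continuousWithinAt
  · -- interval integrability of F t
    apply ContinuousOn.intervalIntegrable
    rw [hIcc]
    intro u hu
    have hR : ContinuousAt (fun u : ℝ => (1 + u • (ρ t - 1))⁻¹) u :=
      (hRloc (t, u) hu).comp (Continuous.continuousAt (Continuous.prodMk_right t))
    exact (((traceMulCLM B).continuous.continuousAt).comp
      (continuousAt_const.mul hR)).continuousWithinAt
  · -- measurability of F' t
    apply ContinuousOn.aestronglyMeasurable _ measurableSet_uIoc
    rw [hIoc]
    intro u hu
    have hu' : u ∈ Set.Icc (0:ℝ) 1 := Set.Ioc_subset_Icc_self hu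
    exact ((hGcont (t, u) hu').comp
      (Continuous.continuousAt (Continuous.prodMk_right t))).continuousWithinAt
  · -- bound
    filter_upwards with u
    intro hu s hs
    have hu' : u ∈ Set.Icc (0:ℝ) 1 := by
      rw [hIoc] at hu
      exact Set.Ioc_subset_Icc_self hu
    have hs' : s ∈ Set.Icc (t-1) (t+1) := by
      rw [Real.ball_eq_Ioo] at hs
      exact Set.Ioo_subset_Icc_self hs
    exact hC (s, u) ⟨hs', hu'⟩
  · -- integrability of the bound
    exact intervalIntegrable_const
  · -- differentiability in s
    filter_upwards with u
    intro hu s hs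
    have hu' : u ∈ Set.Icc (0:ℝ) 1 := by
      rw [hIoc] at hu
      exact Set.Ioc_subset_Icc_self hu
    have h1 : HasDerivAt (fun x => ρ x - 1) (d s) s := (hd s).sub_const 1
    have h2 : HasDerivAt (fun x => 1 + u • (ρ x - 1)) (u • d s) s :=
      (h1.const_smul u).const_add 1
    have h3 := hasDerivAt_matrix_inv h2 (hunit s u hu')
    have h4 := h1.mul h3
    exact ((traceMulCLM B).hasFDerivAt).comp_hasDerivAt s h4


lemma smul_one_comm {k : Type*} [Fintype k] [DecidableEq k] (c : ℂ) (M : Matrix k k ℂ) :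
    (c • (1 : Matrix k k ℂ)) * M = M * (c • (1 : Matrix k k ℂ)) := by
  rw [smul_mul_assoc, one_mul, mul_smul_comm, mul_one]

lemma trace_mul_sub_smul_one {k : Type*} [Fintype k] [DecidableEq k]
    {P X : Matrix k k ℂ} (hP : P.trace = 1) (c : ℂ) :
    (P * (X - c • (1 : Matrix k k ℂ))).trace = (P * X).trace - c := by
  rw [Matrix.mul_sub, Matrix.trace_sub, mul_smul_comm, mul_one, Matrix.trace_smul,
    smul_eq_mul, hP, mul_one]

end Aux

/-- Conservation of the total quantum relative entropy under (commutative) quantum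
replicator dynamics at a fully-mixed Nash equilibrium. -/
theorem total_relative_entropy_invariant
    {n m : Type*} [Fintype n] [DecidableEq n] [Fintype m] [DecidableEq m]
    (Φ : Matrix m m ℂ →ₗ[ℂ] Matrix n n ℂ) (Φd : Matrix n n ℂ →ₗ[ℂ] Matrix m m ℂ)
    (hadj : ∀ (ρ : Matrix n n ℂ) (σ : Matrix m m ℂ),
      ((ρ * Φ σ).trace) = ((σ * Φd ρ).trace))
    (ρstar : Matrix n n ℂ) (σstar : Matrix m m ℂ)
    (hρstar : ρstar.PosDef) (hσstar : σstar.PosDef)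
    (htrρstar : ρstar.trace = 1) (htrσstar : σstar.trace = 1)
    (ρ : ℝ → Matrix n n ℂ) (σ : ℝ → Matrix m m ℂ)
    (hρ : ∀ t, (ρ t).PosDef) (hσ : ∀ t, (σ t).PosDef)
    (htrρ : ∀ t, (ρ t).trace = 1) (htrσ : ∀ t, (σ t).trace = 1)
    (hρcomm : ∀ t, ρ t * Φ (σ t) = Φ (σ t) * ρ t)
    (hσcomm : ∀ t, σ t * Φd (ρ t) = Φd (ρ t) * σ t)
    (hρderiv : ∀ t, HasDerivAt ρ
      (ρ t * (Φ (σ t) - ((ρ t * Φ (σ t)).trace) • (1 : Matrix n n ℂ))) t)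
    (hσderiv : ∀ t, HasDerivAt σ
      (σ t * (-(Φd (ρ t)) + ((σ t * Φd (ρ t)).trace) • (1 : Matrix m m ℂ))) t)
    (heqρ : ∀ σ' : Matrix m m ℂ, σ'.PosSemidef → σ'.trace = 1 →
      (ρstar * Φ σ').trace = (ρstar * Φ σstar).trace)
    (heqσ : ∀ ρ' : Matrix n n ℂ, ρ'.PosSemidef → ρ'.trace = 1 →
      (σstar * Φd ρ').trace = (σstar * Φd ρstar).trace)
    (heq : (ρstar * Φ σstar).trace = (σstar * Φd ρstar).trace) :
    ∀ t, HasDerivAt (fun s =>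
        ((ρstar * (mlog ρstar - mlog (ρ s))).trace).re
          + ((σstar * (mlog σstar - mlog (σ s))).trace).re) 0 t := by
  intro t
  have hρcont : Continuous ρ :=
    continuous_iff_continuousAt.mpr fun s => (hρderiv s).continuousAt
  have hσcont : Continuous σ :=
    continuous_iff_continuousAt.mpr fun s => (hσderiv s).continuousAt
  have hΦc : Continuous Φ := Φ.continuous_of_finiteDimensional
  have hΦdc : Continuous Φd := Φd.continuous_of_finiteDimensional
  have htrnc : Continuous (fun M : Matrix n n ℂ => M.trace) :=
    ((Matrix.traceLinearMap n ℂ ℂ).restrictScalars ℝ).continuous_of_finiteDimensional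
  have htrmc : Continuous (fun M : Matrix m m ℂ => M.trace) :=
    ((Matrix.traceLinearMap m ℂ ℂ).restrictScalars ℝ).continuous_of_finiteDimensional
  -- the ρ-side derivative
  have hd1c : Continuous (fun s => ρ s
      * (Φ (σ s) - ((ρ s * Φ (σ s)).trace) • (1 : Matrix n n ℂ))) := by
    apply hρcont.mul
    exact (hΦc.comp hσcont).sub
      ((htrnc.comp (hρcont.mul (hΦc.comp hσcont))).smul continuous_const)
  have hMρ : (Φ (σ t) - ((ρ t * Φ (σ t)).trace) • (1 : Matrix n n ℂ)) * ρ t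
      = ρ t * (Φ (σ t) - ((ρ t * Φ (σ t)).trace) • (1 : Matrix n n ℂ)) := by
    rw [Matrix.sub_mul, Matrix.mul_sub, ← hρcomm t, smul_one_comm]
  have hcomm1 : (ρ t * (Φ (σ t) - ((ρ t * Φ (σ t)).trace) • (1 : Matrix n n ℂ))) * ρ t
      = ρ t * (ρ t * (Φ (σ t) - ((ρ t * Φ (σ t)).trace) • (1 : Matrix n n ℂ))) := by
    rw [Matrix.mul_assoc, hMρ]
  have h1 := trace_mlog_hasDerivAt ρstar ρ hρ _ hρderiv hd1c t hcomm1
  have hv1 : (ρ t * (Φ (σ t) - ((ρ t * Φ (σ t)).trace) • (1 : Matrix n n ℂ)))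
      * (ρ t)⁻¹ = Φ (σ t) - ((ρ t * Φ (σ t)).trace) • (1 : Matrix n n ℂ) := by
    rw [← hMρ, Matrix.mul_assoc,
      Matrix.mul_nonsing_inv _ ((Matrix.isUnit_iff_isUnit_det _).mp (hρ t).isUnit), mul_one]
  rw [hv1] at h1
  -- the σ-side derivative
  have hd2c : Continuous (fun s => σ s
      * (-(Φd (ρ s)) + ((σ s * Φd (ρ s)).trace) • (1 : Matrix m m ℂ))) := by
    apply hσcont.mul
    exact (hΦdc.comp hρcont).neg.add
      ((htrmc.comp (hσcont.mul (hΦdc.comp hρcont))).smul continuous_const)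
  have hNσ : (-(Φd (ρ t)) + ((σ t * Φd (ρ t)).trace) • (1 : Matrix m m ℂ)) * σ t
      = σ t * (-(Φd (ρ t)) + ((σ t * Φd (ρ t)).trace) • (1 : Matrix m m ℂ)) := by
    rw [Matrix.add_mul, Matrix.mul_add, Matrix.neg_mul, Matrix.mul_neg, ← hσcomm t,
      smul_one_comm]
  have hcomm2 : (σ t * (-(Φd (ρ t)) + ((σ t * Φd (ρ t)).trace) • (1 : Matrix m m ℂ))) * σ t
      = σ t * (σ t * (-(Φd (ρ t)) + ((σ t * Φd (ρ t)).trace) • (1 : Matrix m m ℂ))) := by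
    rw [Matrix.mul_assoc, hNσ]
  have h2 := trace_mlog_hasDerivAt σstar σ hσ _ hσderiv hd2c t hcomm2
  have hv2 : (σ t * (-(Φd (ρ t)) + ((σ t * Φd (ρ t)).trace) • (1 : Matrix m m ℂ)))
      * (σ t)⁻¹ = -(Φd (ρ t)) + ((σ t * Φd (ρ t)).trace) • (1 : Matrix m m ℂ) := by
    rw [← hNσ, Matrix.mul_assoc,
      Matrix.mul_nonsing_inv _ ((Matrix.isUnit_iff_isUnit_det _).mp (hσ t).isUnit), mul_one]
  rw [hv2] at h2
  -- evaluate the two derivative values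
  have hval1 : (ρstar * (Φ (σ t)
      - ((ρ t * Φ (σ t)).trace) • (1 : Matrix n n ℂ))).trace
      = (ρstar * Φ σstar).trace - (ρ t * Φ (σ t)).trace := by
    rw [trace_mul_sub_smul_one htrρstar, heqρ (σ t) (hσ t).posSemidef (htrσ t)]
  have hval2 : (σstar * (-(Φd (ρ t))
      + ((σ t * Φd (ρ t)).trace) • (1 : Matrix m m ℂ))).trace
      = -(σstar * Φd ρstar).trace + (σ t * Φd (ρ t)).trace := by
    have hrw : -(Φd (ρ t)) + ((σ t * Φd (ρ t)).trace) • (1 : Matrix m m ℂ)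
        = -(Φd (ρ t) - ((σ t * Φd (ρ t)).trace) • (1 : Matrix m m ℂ)) := by
      rw [neg_sub, neg_add_eq_sub]
    rw [hrw, Matrix.mul_neg, Matrix.trace_neg, trace_mul_sub_smul_one htrσstar,
      heqσ (ρ t) (hρ t).posSemidef (htrρ t), neg_sub]
    ring
  rw [hval1] at h1
  rw [hval2] at h2
  -- combine
  have hsum := h1.add h2
  have hzero : ((ρstar * Φ σstar).trace - (ρ t * Φ (σ t)).trace)
      + (-(σstar * Φd ρstar).trace + (σ t * Φd (ρ t)).trace) = 0 := by
    rw [heq, hadj (ρ t) (σ t)]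
    ring
  rw [hzero] at hsum
  have hconst : HasDerivAt (fun _ : ℝ =>
      (ρstar * mlog ρstar).trace + (σstar * mlog σstar).trace) (0:ℂ) t :=
    hasDerivAt_const _ _
  have hdiff := hconst.sub hsum
  rw [sub_zero] at hdiff
  have hre := (Complex.reCLM.hasFDerivAt).comp_hasDerivAt t hdiff
  have hfe : (fun s =>
        ((ρstar * (mlog ρstar - mlog (ρ s))).trace).re
          + ((σstar * (mlog σstar - mlog (σ s))).trace).re)
      = fun s => Complex.reCLM (((ρstar * mlog ρstar).trace + (σstar * mlog σstar).trace)
          - ((ρstar * mlog (ρ s)).trace + (σstar * mlog (σ s)).trace)) := by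
    funext s
    simp only [Matrix.mul_sub, Matrix.trace_sub, Complex.reCLM_apply, Complex.sub_re,
      Complex.add_re]
    ring
  rw [hfe]
  simpa [Function.comp_def, Pi.sub_def, Pi.add_def] using hre
end
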